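/- (Enomoto, Ohba, Ota, Sakamoto) For every integer k ≥ 2, the complete k-partite graph K_{4,2*(k-1)}, with one part of size 4 and k−1 parts of size 2, has choice number k if k is odd, and choice number k+1 if k is even. -/

import Mathlib

/-- `G` has a proper coloring in which every vertex gets a color from its own list. -/
def ListColorable {V : Type*} (G : SimpleGraph V) (L : V → Finset ℕ) : Prop :=
  ∃ c : V → ℕ, (∀ v, c v ∈ L v) ∧ ∀ ⦃u w⦄, G.Adj u w → c u ≠ c w

/-- `G` is `k`-choosable: `L`-colorable for every list assignment with all lists of size ≥ `k`. -/
def Choosable {V : Type*} (G : SimpleGraph V) (k : ℕ) : Prop :=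
  ∀ L : V → Finset ℕ, (∀ v, k ≤ (L v).card) → ListColorable G L

open Finset

namespace EOOS

/-- Erdős–Rubin–Taylor-style lemma, over a finite index set `s`, avoiding a
forbidden color set `F`. -/
theorem ERT_aux {ι : Type} [DecidableEq ι] (X Y : ι → Finset ℕ) :
    ∀ (s : Finset ι) (F : Finset ℕ),
      (∀ i ∈ s, s.card ≤ ((X i) \ F).card ∧ s.card ≤ ((Y i) \ F).card) →
      ∃ f g : ι → ℕ,
        (∀ i ∈ s, f i ∈ (X i) \ F) ∧ (∀ i ∈ s, g i ∈ (Y i) \ F) ∧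
        (∀ i ∈ s, ∀ i' ∈ s, i ≠ i' →
          f i ≠ f i' ∧ f i ≠ g i' ∧ g i ≠ f i' ∧ g i ≠ g i') := by
  intro s
  induction s using Finset.strongInduction with
  | _ s IH =>
  intro F hle
  by_cases hj : ∃ i ∈ s, (((X i) ∩ (Y i)) \ F).Nonempty
  · obtain ⟨i0, hi0, e, he⟩ := hj
    have heX : e ∈ X i0 \ F := by
      simp only [mem_sdiff, mem_inter] at he ⊢; tauto
    have heY : e ∈ Y i0 \ F := by
      simp only [mem_sdiff, mem_inter] at he ⊢; tauto
    have h1 : ∀ i ∈ s.erase i0,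
        (s.erase i0).card ≤ ((X i) \ insert e F).card ∧
        (s.erase i0).card ≤ ((Y i) \ insert e F).card := by
      intro i hi
      have hs := hle i (mem_of_mem_erase hi)
      have hc : (s.erase i0).card = s.card - 1 := card_erase_of_mem hi0
      constructor
      · have hxe : (X i) \ insert e F = ((X i) \ F).erase e := by
          ext x; simp only [mem_sdiff, mem_erase, mem_insert]; tauto
        rw [hxe]
        have := Finset.pred_card_le_card_erase (s := (X i) \ F) (a := e)
        omega
      · have hye : (Y i) \ insert e F = ((Y i) \ F).erase e := by
          ext x; simp only [mem_sdiff, mem_erase, mem_insert]; tauto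
        rw [hye]
        have := Finset.pred_card_le_card_erase (s := (Y i) \ F) (a := e)
        omega
    obtain ⟨f, g, hf, hg, hd⟩ := IH (s.erase i0) (erase_ssubset hi0) (insert e F) h1
    have key : ∀ j ∈ s.erase i0, f j ≠ e ∧ g j ≠ e := by
      intro j hj'
      have h1' := hf j hj'; have h2' := hg j hj'
      simp only [mem_sdiff, mem_insert] at h1' h2'
      constructor <;> rintro rfl <;> tauto
    refine ⟨Function.update f i0 e, Function.update g i0 e, ?_, ?_, ?_⟩
    · intro i hi
      rcases eq_or_ne i i0 with rfl | hne
      · simpa using heX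
      · rw [Function.update_of_ne hne]
        have := hf i (mem_erase.2 ⟨hne, hi⟩)
        simp only [mem_sdiff, mem_insert] at this ⊢; tauto
    · intro i hi
      rcases eq_or_ne i i0 with rfl | hne
      · simpa using heY
      · rw [Function.update_of_ne hne]
        have := hg i (mem_erase.2 ⟨hne, hi⟩)
        simp only [mem_sdiff, mem_insert] at this ⊢; tauto
    · intro i hi i' hi' hne
      rcases eq_or_ne i i0 with rfl | hnei
      · have hi'm : i' ∈ s.erase i := mem_erase.2 ⟨hne.symm, hi'⟩
        obtain ⟨k1, k2⟩ := key i' hi'm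
        simp only [Function.update_self, Function.update_of_ne hne.symm]
        exact ⟨k1.symm, k2.symm, k1.symm, k2.symm⟩
      · rcases eq_or_ne i' i0 with rfl | hnei'
        · have him : i ∈ s.erase i' := mem_erase.2 ⟨hnei, hi⟩
          obtain ⟨k1, k2⟩ := key i him
          simp only [Function.update_self, Function.update_of_ne hnei]
          exact ⟨k1, k1, k2, k2⟩
        · rw [Function.update_of_ne hnei, Function.update_of_ne hnei,
            Function.update_of_ne hnei', Function.update_of_ne hnei']
          exact hd i (mem_erase.2 ⟨hnei, hi⟩) i' (mem_erase.2 ⟨hnei', hi'⟩) hne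
  · push_neg at hj
    have hj' : ∀ i ∈ s, ((X i) ∩ (Y i)) \ F = ∅ := fun i hi =>
      hj i hi
    classical
    set t : (↥s × Bool) → Finset ℕ :=
      fun p => (if p.2 then X p.1.1 else Y p.1.1) \ F with ht
    have hall : ∀ s' : Finset (↥s × Bool), s'.card ≤ (s'.biUnion t).card := by
      intro s'
      rcases s'.eq_empty_or_nonempty with rfl | ⟨x, hx⟩
      · simp
      have hcard : ∀ x : ↥s × Bool, s.card ≤ (t x).card := by
        intro x
        have := hle x.1.1 x.1.2
        cases hb : x.2 <;> simp only [ht, hb, if_true, if_false] <;> tauto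
      by_cases hsmall : s'.card ≤ s.card
      · calc s'.card ≤ s.card := hsmall
          _ ≤ (t x).card := hcard x
          _ ≤ (s'.biUnion t).card := card_le_card (subset_biUnion_of_mem t hx)
      · push_neg at hsmall
        have hdouble : ∃ i : ↥s, (i, true) ∈ s' ∧ (i, false) ∈ s' := by
          by_contra hno
          push_neg at hno
          have hinj : Set.InjOn (fun p : ↥s × Bool => p.1) ↑s' := by
            rintro ⟨p1, p2⟩ hp ⟨q1, q2⟩ hq h
            simp only at h
            subst h
            cases p2 <;> cases q2
            · rfl
            · exact absurd hp (hno p1 hq)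
            · exact absurd hq (hno p1 hp)
            · rfl
          have h1 : s'.card ≤ (univ : Finset ↥s).card :=
            Finset.card_le_card_of_injOn _ (fun _ _ => mem_univ _) hinj
          rw [Finset.card_univ, Fintype.card_coe] at h1
          omega
        obtain ⟨i, h1, h2⟩ := hdouble
        have hdisj : Disjoint ((X i.1) \ F) ((Y i.1) \ F) := by
          rw [Finset.disjoint_left]
          intro a ha hb
          have hmem : a ∈ ((X i.1) ∩ (Y i.1)) \ F := by
            simp only [mem_sdiff, mem_inter] at ha hb ⊢; tauto
          rw [hj' i.1 i.2] at hmem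
          exact absurd hmem (notMem_empty a)
        have hsub : ((X i.1) \ F) ∪ ((Y i.1) \ F) ⊆ s'.biUnion t := by
          apply Finset.union_subset
          · have := subset_biUnion_of_mem t h1
            simpa [ht] using this
          · have := subset_biUnion_of_mem t h2
            simpa [ht] using this
        have h3 := card_le_card hsub
        rw [card_union_of_disjoint hdisj] at h3
        have h4 : s'.card ≤ 2 * s.card := by
          have := Finset.card_le_univ s'
          simpa [Fintype.card_prod, Fintype.card_coe, mul_comm] using this
        have hX := hle i.1 i.2
        omega
    obtain ⟨c, hcinj, hcmem⟩ :=
      (Finset.all_card_le_biUnion_card_iff_exists_injective t).1 hall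
    refine ⟨fun i => if h : i ∈ s then c (⟨i, h⟩, true) else 0,
            fun i => if h : i ∈ s then c (⟨i, h⟩, false) else 0, ?_, ?_, ?_⟩
    · intro i hi; simp only [dif_pos hi]; simpa [ht] using hcmem (⟨i, hi⟩, true)
    · intro i hi; simp only [dif_pos hi]; simpa [ht] using hcmem (⟨i, hi⟩, false)
    · intro i hi i' hi' hne
      simp only [dif_pos hi, dif_pos hi']
      refine ⟨fun h => ?_, fun h => ?_, fun h => ?_, fun h => ?_⟩ <;>
      · have := hcinj h
        simp only [Prod.mk.injEq, Subtype.mk.injEq] at this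
        tauto


/-- Valid representative choices for a system of "pairs" `(X i, Y i)`. -/
def PairOK {r : ℕ} (X Y : Fin r → Finset ℕ) (f g : Fin r → ℕ) : Prop :=
  (∀ i, f i ∈ X i) ∧ (∀ i, g i ∈ Y i) ∧
    ∀ i i', i ≠ i' → f i ≠ f i' ∧ f i ≠ g i' ∧ g i ≠ f i' ∧ g i ≠ g i'

/-- Abstract solvability of the list-coloring problem for `K_{4,2,...,2}`. -/
def Solvable {r : ℕ} (X Y : Fin r → Finset ℕ) (A : Fin 4 → Finset ℕ) : Prop :=
  ∃ (f g : Fin r → ℕ) (a : Fin 4 → ℕ), PairOK X Y f g ∧ (∀ j, a j ∈ A j) ∧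
    ∀ j i, a j ≠ f i ∧ a j ≠ g i

/-- If all lists have at least `r + 2` colors, the problem is solvable
(treat the 4-part as two extra pairs). -/
theorem U2 {r : ℕ} (X Y : Fin r → Finset ℕ) (A : Fin 4 → Finset ℕ)
    (hX : ∀ i, r + 2 ≤ (X i).card) (hY : ∀ i, r + 2 ≤ (Y i).card)
    (hA : ∀ j, r + 2 ≤ (A j).card) : Solvable X Y A := by
  classical
  have hcard : (univ : Finset (Fin r ⊕ Bool)).card = r + 2 := by
    simp [Fintype.card_sum]
  obtain ⟨f2, g2, hf2, hg2, hd2⟩ :=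
    ERT_aux (Sum.elim X (fun b : Bool => if b then A 0 else A 2))
      (Sum.elim Y (fun b : Bool => if b then A 1 else A 3)) univ ∅ (by
        intro i _
        rw [hcard]
        rcases i with i | b
        · simpa using ⟨hX i, hY i⟩
        · cases b <;> simpa using ⟨by linarith [hA 0, hA 2], by linarith [hA 1, hA 3]⟩)
  have hne : ∀ (i : Fin r) (b : Bool), (Sum.inr b : Fin r ⊕ Bool) ≠ Sum.inl i := by
    intro i b h; exact absurd h (by simp)
  refine ⟨fun i => f2 (Sum.inl i), fun i => g2 (Sum.inl i),
    fun j => if j = 0 then f2 (Sum.inr true) else if j = 1 then g2 (Sum.inr true)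
      else if j = 2 then f2 (Sum.inr false) else g2 (Sum.inr false),
    ⟨?_, ?_, ?_⟩, ?_, ?_⟩
  · intro i; simpa using hf2 (Sum.inl i) (mem_univ _)
  · intro i; simpa using hg2 (Sum.inl i) (mem_univ _)
  · intro i i' hne'
    exact hd2 (Sum.inl i) (mem_univ _) (Sum.inl i') (mem_univ _) (by simpa using hne')
  · intro j
    fin_cases j
    · simpa using hf2 (Sum.inr true) (mem_univ _)
    · simpa using hg2 (Sum.inr true) (mem_univ _)
    · simpa using hf2 (Sum.inr false) (mem_univ _)
    · simpa using hg2 (Sum.inr false) (mem_univ _)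
  · intro j i
    fin_cases j
    · have := hd2 (Sum.inr true) (mem_univ _) (Sum.inl i) (mem_univ _) (hne i true)
      simpa using ⟨this.1, this.2.1⟩
    · have := hd2 (Sum.inr true) (mem_univ _) (Sum.inl i) (mem_univ _) (hne i true)
      simpa using ⟨this.2.2.1, this.2.2.2⟩
    · have := hd2 (Sum.inr false) (mem_univ _) (Sum.inl i) (mem_univ _) (hne i false)
      simpa using ⟨this.1, this.2.1⟩
    · have := hd2 (Sum.inr false) (mem_univ _) (Sum.inl i) (mem_univ _) (hne i false)
      simpa using ⟨this.2.2.1, this.2.2.2⟩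


/-- From an injective system of distinct representatives on the doubled index,
get a `PairOK` avoiding `F`. -/
theorem pairok_SDR {r : ℕ} (X Y : Fin r → Finset ℕ) (F : Finset ℕ)
    (hall : ∀ s : Finset (Fin r × Bool),
      s.card ≤ (s.biUnion (fun p => (if p.2 then X p.1 else Y p.1) \ F)).card) :
    ∃ f g : Fin r → ℕ, PairOK X Y f g ∧ ∀ i, f i ∉ F ∧ g i ∉ F := by
  obtain ⟨φ, hinj, hmem⟩ :=
    (Finset.all_card_le_biUnion_card_iff_exists_injective _).1 hall
  refine ⟨fun i => φ (i, true), fun i => φ (i, false), ⟨?_, ?_, ?_⟩, ?_⟩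
  · intro i; exact (mem_sdiff.1 (hmem (i, true))).1
  · intro i; exact (mem_sdiff.1 (hmem (i, false))).1
  · intro i i' hne
    refine ⟨fun h => ?_, fun h => ?_, fun h => ?_, fun h => ?_⟩ <;>
    · have := hinj h
      simp only [Prod.mk.injEq] at this
      tauto
  · intro i
    exact ⟨(mem_sdiff.1 (hmem (i, true))).2, (mem_sdiff.1 (hmem (i, false))).2⟩

/-- Case of a color common to all four lists of the 4-part. -/
theorem solvable_of_common {r : ℕ} (X Y : Fin r → Finset ℕ) (A : Fin 4 → Finset ℕ)
    (e : ℕ) (he : ∀ j, e ∈ A j)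
    (hX : ∀ i, r + 1 ≤ (X i).card) (hY : ∀ i, r + 1 ≤ (Y i).card) :
    Solvable X Y A := by
  have hcond : ∀ i ∈ (univ : Finset (Fin r)), (univ : Finset (Fin r)).card ≤ ((X i) \ {e}).card
      ∧ (univ : Finset (Fin r)).card ≤ ((Y i) \ {e}).card := by
    intro i _
    rw [card_univ, Fintype.card_fin]
    constructor
    · rw [sdiff_singleton_eq_erase]
      have h1 := Finset.pred_card_le_card_erase (s := X i) (a := e)
      have := hX i
      omega
    · rw [sdiff_singleton_eq_erase]
      have h1 := Finset.pred_card_le_card_erase (s := Y i) (a := e)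
      have := hY i
      omega
  obtain ⟨f, g, hf, hg, hd⟩ := ERT_aux X Y univ {e} hcond
  refine ⟨f, g, fun _ => e, ⟨?_, ?_, ?_⟩, fun j => he j, ?_⟩
  · intro i; exact (mem_sdiff.1 (hf i (mem_univ i))).1
  · intro i; exact (mem_sdiff.1 (hg i (mem_univ i))).1
  · intro i i' hne; exact hd i (mem_univ i) i' (mem_univ i') hne
  · intro j i
    have h1 := (mem_sdiff.1 (hf i (mem_univ i))).2
    have h2 := (mem_sdiff.1 (hg i (mem_univ i))).2
    simp only [mem_singleton] at h1 h2
    exact ⟨fun h => h1 (h.symm), fun h => h2 (h.symm)⟩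

/-- Structure of a Hall violation for a split pair system with lists of size
`≥ r + 1`, avoiding a forbidden set of at most two colors: all (selected) sides
are equal to `C ∪ F`. -/
theorem violation_structure {r : ℕ} (X Y : Fin r → Finset ℕ) (F : Finset ℕ)
    (hX : ∀ i, r + 1 ≤ (X i).card) (hY : ∀ i, r + 1 ≤ (Y i).card)
    (hsplit : ∀ i, X i ∩ Y i = ∅) (hF : F.card ≤ 2)
    (hviol : ¬ ∀ s : Finset (Fin r × Bool),
      s.card ≤ (s.biUnion (fun p => (if p.2 then X p.1 else Y p.1) \ F)).card) :
    ∃ (z : Fin r → Bool) (C : Finset ℕ), C.card = r - 1 ∧ 1 ≤ r ∧ Disjoint C F ∧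
      F.card = 2 ∧ ∀ i, (if z i then X i else Y i) = C ∪ F := by
  push_neg at hviol
  obtain ⟨s, hs⟩ := hviol
  set t : Fin r × Bool → Finset ℕ := fun p => (if p.2 then X p.1 else Y p.1) \ F with ht
  have hsne : s.Nonempty := by
    rcases s.eq_empty_or_nonempty with rfl | h
    · simp at hs
    · exact h
  have htcard : ∀ p, r + 1 - F.card ≤ (t p).card := by
    intro p
    simp only [ht]
    have h1 : (if p.2 then X p.1 else Y p.1).card ≥ r + 1 := by
      cases hp : p.2
      · rw [if_neg (by simp [hp])]; exact hY p.1
      · rw [if_pos (by simp [hp])]; exact hX p.1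
    have h2 := Finset.le_card_sdiff F (if p.2 then X p.1 else Y p.1)
    omega
  -- no doubled index
  have hnod : ∀ i : Fin r, ¬((i, true) ∈ s ∧ (i, false) ∈ s) := by
    rintro i ⟨h1, h2⟩
    have hdisj : Disjoint ((X i) \ F) ((Y i) \ F) := by
      rw [Finset.disjoint_left]
      intro a ha hb
      have : a ∈ X i ∩ Y i := mem_inter.2 ⟨(mem_sdiff.1 ha).1, (mem_sdiff.1 hb).1⟩
      rw [hsplit i] at this
      exact absurd this (notMem_empty a)
    have hsub : ((X i) \ F) ∪ ((Y i) \ F) ⊆ s.biUnion t := by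
      apply Finset.union_subset
      · have := subset_biUnion_of_mem t h1; simpa [ht] using this
      · have := subset_biUnion_of_mem t h2; simpa [ht] using this
    have h3 := card_le_card hsub
    rw [card_union_of_disjoint hdisj] at h3
    -- (X i \ F) ∪ (Y i \ F) = (X i ∪ Y i) \ F has card ≥ 2r + 2 - |F| ≥ 2r
    have h4 : (X i).card - F.card ≤ ((X i) \ F).card := Finset.le_card_sdiff F (X i)
    have h5 : (Y i).card ≤ ((Y i) \ F).card + F.card := by
      have := Finset.le_card_sdiff F (Y i); omega
    have h6 : ((X i) \ F).card + ((Y i) \ F).card ≥ 2 * r := by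
      have hXi := hX i; have hYi := hY i
      -- card((X∪Y)\F) ≥ |X| + |Y| - |F|
      have hd2 : Disjoint (X i) (Y i) := by
        rw [Finset.disjoint_left]
        intro a ha hb
        have : a ∈ X i ∩ Y i := mem_inter.2 ⟨ha, hb⟩
        rw [hsplit i] at this
        exact absurd this (notMem_empty a)
      have he1 : ((X i) \ F) ∪ ((Y i) \ F) = ((X i) ∪ (Y i)) \ F := by
        ext x; simp only [mem_union, mem_sdiff]; tauto
      have he2 := Finset.le_card_sdiff F ((X i) ∪ (Y i))
      have he3 : ((X i) ∪ (Y i)).card = (X i).card + (Y i).card :=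
        card_union_of_disjoint hd2
      have he4 : (((X i) ∪ (Y i)) \ F).card = (((X i) \ F) ∪ ((Y i) \ F)).card := by
        rw [he1]
      rw [card_union_of_disjoint hdisj] at he4
      omega
    have h7 : s.card ≤ 2 * r := by
      have := Finset.card_le_univ s
      simp only [Finset.card_univ, Fintype.card_prod, Fintype.card_fin,
        Fintype.card_bool] at this
      omega
    omega
  have hnodd : ∀ p ∈ s, ∀ q ∈ s, p.1 = q.1 → p = q := by
    rintro ⟨i, b⟩ hp ⟨i', b'⟩ hq h
    simp only at h
    subst h
    cases b <;> cases b'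
    · rfl
    · exact absurd ⟨hq, hp⟩ (hnod i)
    · exact absurd ⟨hp, hq⟩ (hnod i)
    · rfl
  have hscard : s.card ≤ r := by
    have h1 : s.card = (s.image Prod.fst).card := by
      rw [Finset.card_image_of_injOn]
      intro p hp q hq h
      exact hnodd p hp q hq h
    rw [h1]
    have := Finset.card_le_univ (s.image Prod.fst)
    simpa using this
  have hr1 : 1 ≤ r := by
    obtain ⟨p, hp⟩ := hsne
    have : s.card ≥ 1 := Finset.card_pos.2 ⟨p, hp⟩
    omega
  -- biUnion has card ≥ r - 1, so s.card = r
  have hbig : r - 1 ≤ (s.biUnion t).card := by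
    obtain ⟨p, hp⟩ := hsne
    have h1 := htcard p
    have h2 := card_le_card (subset_biUnion_of_mem t hp)
    omega
  have hFcard : F.card = 2 := by
    by_contra h
    have : F.card ≤ 1 := by omega
    obtain ⟨p, hp⟩ := hsne
    have h1 := htcard p
    have h2 := card_le_card (subset_biUnion_of_mem t hp)
    omega
  have hseq : s.card = r := by omega
  have hbieq : (s.biUnion t).card = r - 1 := by omega
  -- every index appears exactly once
  have himg : s.image Prod.fst = univ := by
    apply Finset.eq_univ_of_card
    rw [Finset.card_image_of_injOn (fun p hp q hq h => hnodd p hp q hq h), hseq]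
    simp
  have hall_idx : ∀ i : Fin r, ∃ b, (i, b) ∈ s := by
    intro i
    have hmem : i ∈ s.image Prod.fst := by rw [himg]; exact mem_univ i
    obtain ⟨p, hp, hpi⟩ := Finset.mem_image.mp hmem
    exact ⟨p.2, by rw [← hpi]; simpa using hp⟩
  set z : Fin r → Bool := fun i => (hall_idx i).choose with hzdef
  have hz : ∀ i, (i, z i) ∈ s := fun i => (hall_idx i).choose_spec
  set C : Finset ℕ := s.biUnion t with hC
  have hCF : Disjoint C F := by
    rw [Finset.disjoint_left]
    intro a ha haF
    rw [hC, Finset.mem_biUnion] at ha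
    obtain ⟨p, _, hp⟩ := ha
    exact (mem_sdiff.1 hp).2 haF
  have heach : ∀ i, (if z i then X i else Y i) \ F = C := by
    intro i
    have hsub : t (i, z i) ⊆ C := subset_biUnion_of_mem t (hz i)
    have hcardle : C.card ≤ (t (i, z i)).card := by
      have := htcard (i, z i)
      omega
    exact Finset.eq_of_subset_of_card_le hsub hcardle
  refine ⟨z, C, hbieq, hr1, hCF, hFcard, ?_⟩
  intro i
  have h1 : (if z i then X i else Y i) ⊆ C ∪ F := by
    intro x hx
    rw [mem_union]
    by_cases hxF : x ∈ F
    · exact Or.inr hxF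
    · left
      rw [← heach i]
      exact mem_sdiff.2 ⟨hx, hxF⟩
  have h2 : (C ∪ F).card ≤ (if z i then X i else Y i).card := by
    have hcu : (C ∪ F).card = C.card + F.card := card_union_of_disjoint hCF
    have h3 : r + 1 ≤ (if z i then X i else Y i).card := by
      cases hzi : z i
      · rw [if_neg (by simp [hzi])]; exact hY i
      · rw [if_pos (by simp [hzi])]; exact hX i
    omega
  exact Finset.eq_of_subset_of_card_le h1 h2


/-- SDR for a single family avoiding a small set `T`, unless all lists are equal. -/
theorem SDR_single {r : ℕ} (Yl : Fin r → Finset ℕ) (T : Finset ℕ)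
    (h : ∀ i, r + 1 ≤ (Yl i).card) (hT : T.card ≤ 2)
    (hne : ¬ ∀ i i' : Fin r, Yl i = Yl i') :
    ∃ R : Fin r → ℕ, Function.Injective R ∧ ∀ i, R i ∈ (Yl i) \ T := by
  by_cases hall : ∀ s : Finset (Fin r), s.card ≤ (s.biUnion (fun i => (Yl i) \ T)).card
  · obtain ⟨R, hinj, hmem⟩ :=
      (Finset.all_card_le_biUnion_card_iff_exists_injective _).1 hall
    exact ⟨R, hinj, hmem⟩
  · exfalso
    push_neg at hall
    obtain ⟨s, hs⟩ := hall
    have hsne : s.Nonempty := by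
      rcases s.eq_empty_or_nonempty with rfl | hne'
      · simp at hs
      · exact hne'
    have htc : ∀ i, r - 1 ≤ ((Yl i) \ T).card := by
      intro i
      have := Finset.le_card_sdiff T (Yl i)
      have := h i
      omega
    have hsle : s.card ≤ r := by
      have := Finset.card_le_univ s
      simpa using this
    have hbig : r - 1 ≤ (s.biUnion (fun i => (Yl i) \ T)).card := by
      obtain ⟨i, hi⟩ := hsne
      have h2 : ((Yl i) \ T).card ≤ (s.biUnion (fun i => (Yl i) \ T)).card :=
        card_le_card (subset_biUnion_of_mem (fun i => (Yl i) \ T) hi)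
      have := htc i
      omega
    have hr1 : 1 ≤ r := by
      obtain ⟨i, _⟩ := hsne
      exact Fin.pos i
    have hseq : s.card = r := by omega
    have hsuniv : s = univ := Finset.eq_univ_of_card s (by rw [hseq]; simp)
    set U := s.biUnion (fun i => (Yl i) \ T) with hU
    have hUcard : U.card = r - 1 := by omega
    have heach : ∀ i, Yl i = U ∪ T := by
      intro i
      have hsub : (Yl i) \ T ⊆ U :=
        subset_biUnion_of_mem (fun i => (Yl i) \ T) (by rw [hsuniv]; exact mem_univ i)
      have he1 : (Yl i) \ T = U := by
        apply Finset.eq_of_subset_of_card_le hsub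
        have := htc i
        omega
      have h2 : Yl i ⊆ U ∪ T := by
        intro x hx
        rw [mem_union]
        by_cases hxT : x ∈ T
        · exact Or.inr hxT
        · exact Or.inl (by rw [← he1]; exact mem_sdiff.2 ⟨hx, hxT⟩)
      apply Finset.eq_of_subset_of_card_le h2
      have := Finset.card_union_le U T
      have := h i
      omega
    exact hne (fun i i' => by rw [heach i, heach i'])

/-- Construct a solution from the rigid `Z`-structure together with a system of
representatives for the other sides. -/
theorem solvable_of_Zstruct {r : ℕ} (X Y : Fin r → Finset ℕ) (A : Fin 4 → Finset ℕ)
    (z : Fin r → Bool) (Z : Finset ℕ)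
    (hZs : ∀ i, (if z i then X i else Y i) = Z) (hZcard : Z.card = r + 1)
    (zst : ℕ) (hzst : zst ∈ Z)
    (R : Fin r → ℕ) (hRinj : Function.Injective R)
    (hRmem : ∀ i, R i ∈ (if z i then Y i else X i)) (hRZ : ∀ i, R i ∉ Z)
    (ha : ∀ j, ∃ α, α ∈ A j ∧ (α = zst ∨ (α ∉ Z ∧ ∀ i, α ≠ R i))) :
    Solvable X Y A := by
  classical
  have hzer : (Z.erase zst).card = r := by rw [card_erase_of_mem hzst, hZcard]; omega
  set ζ : Fin r → ℕ := fun i => ((Z.erase zst).equivFin.symm (Fin.cast hzer.symm i) : ℕ)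
    with hζ
  have hζmem : ∀ i, ζ i ∈ Z.erase zst := fun i =>
    ((Z.erase zst).equivFin.symm (Fin.cast hzer.symm i)).2
  have hζinj : Function.Injective ζ := by
    intro i i' hii
    have h1 := Subtype.coe_injective hii
    have h2 := (Z.erase zst).equivFin.symm.injective h1
    have h3 := congrArg Fin.val h2
    exact Fin.ext h3
  have hζZ : ∀ i, ζ i ∈ Z := fun i => mem_of_mem_erase (hζmem i)
  have hζzst : ∀ i, ζ i ≠ zst := fun i => (mem_erase.1 (hζmem i)).1
  have hdist : ∀ i i' : Fin r, i ≠ i' → ∀ u v : ℕ,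
      (u = ζ i ∨ u = R i) → (v = ζ i' ∨ v = R i') → u ≠ v := by
    intro i i' hne u v hu hv
    rcases hu with rfl | rfl <;> rcases hv with rfl | rfl
    · exact fun h => hne (hζinj h)
    · exact fun h => hRZ i' (h ▸ hζZ i)
    · exact fun h => hRZ i (h.symm ▸ hζZ i')
    · exact fun h => hne (hRinj h)
  refine ⟨fun i => if z i then ζ i else R i, fun i => if z i then R i else ζ i,
    fun j => (ha j).choose, ⟨?_, ?_, ?_⟩, ?_, ?_⟩
  · intro i
    by_cases hzi : z i
    · simp only [if_pos hzi]
      have hXZ : X i = Z := by have := hZs i; rwa [if_pos hzi] at this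
      rw [hXZ]
      exact hζZ i
    · simp only [if_neg hzi]
      have := hRmem i
      rwa [if_neg hzi] at this
  · intro i
    by_cases hzi : z i
    · simp only [if_pos hzi]
      have := hRmem i
      rwa [if_pos hzi] at this
    · simp only [if_neg hzi]
      have hYZ : Y i = Z := by have := hZs i; rwa [if_neg hzi] at this
      rw [hYZ]
      exact hζZ i
  · intro i i' hne
    have hf : ∀ l : Fin r, (if z l then ζ l else R l) = ζ l ∨
        (if z l then ζ l else R l) = R l := by
      intro l; by_cases hzl : z l
      · rw [if_pos hzl]; exact Or.inl rfl
      · rw [if_neg hzl]; exact Or.inr rfl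
    have hg : ∀ l : Fin r, (if z l then R l else ζ l) = ζ l ∨
        (if z l then R l else ζ l) = R l := by
      intro l; by_cases hzl : z l
      · rw [if_pos hzl]; exact Or.inr rfl
      · rw [if_neg hzl]; exact Or.inl rfl
    exact ⟨hdist i i' hne _ _ (hf i) (hf i'), hdist i i' hne _ _ (hf i) (hg i'),
      hdist i i' hne _ _ (hg i) (hf i'), hdist i i' hne _ _ (hg i) (hg i')⟩
  · exact fun j => ((ha j).choose_spec).1
  · intro j i
    obtain ⟨hmem, hcase⟩ := (ha j).choose_spec
    have hnot : (ha j).choose ≠ ζ i ∧ (ha j).choose ≠ R i := by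
      rcases hcase with heq | ⟨hnZ, hnR⟩
      · rw [heq]
        exact ⟨fun h => hζzst i h.symm, fun h => hRZ i (h ▸ hzst)⟩
      · exact ⟨fun h => hnZ (h ▸ hζZ i), hnR i⟩
    constructor
    · by_cases hzi : z i
      · simp only [if_pos hzi]; exact hnot.1
      · simp only [if_neg hzi]; exact hnot.2
    · by_cases hzi : z i
      · simp only [if_pos hzi]; exact hnot.2
      · simp only [if_neg hzi]; exact hnot.1

/-- The double-counting step for the "all partner lists equal" case. -/
theorem count2A {r : ℕ} (A : Fin 4 → Finset ℕ) (Z W0 : Finset ℕ)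
    (hZ : Z.card = r + 1) (hW : W0.card = r + 1)
    (hcov : ∀ zs ∈ Z, ∀ y ∈ W0, ∃ j, zs ∉ A j ∧ y ∉ A j ∧ A j ⊆ Z ∪ W0) :
    (r+1) * (r+1) ≤ ∑ j ∈ univ.filter (fun j => A j ⊆ Z ∪ W0),
      (Z \ A j).card * (W0 \ A j).card := by
  classical
  have hsub : Z ×ˢ W0 ⊆ (univ.filter (fun j => A j ⊆ Z ∪ W0)).biUnion
      (fun j => (Z \ A j) ×ˢ (W0 \ A j)) := by
    rintro ⟨zs, y⟩ hp
    rw [Finset.mem_product] at hp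
    obtain ⟨j, h1, h2, h3⟩ := hcov zs hp.1 y hp.2
    rw [Finset.mem_biUnion]
    refine ⟨j, by simp [h3], ?_⟩
    rw [Finset.mem_product]
    exact ⟨mem_sdiff.2 ⟨hp.1, h1⟩, mem_sdiff.2 ⟨hp.2, h2⟩⟩
  have h1 : (Z ×ˢ W0).card = (r+1) * (r+1) := by rw [Finset.card_product, hZ, hW]
  have h2 := card_le_card hsub
  have h3 := Finset.card_biUnion_le (s := univ.filter (fun j => A j ⊆ Z ∪ W0))
    (t := fun j => (Z \ A j) ×ˢ (W0 \ A j))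
  calc (r+1) * (r+1) = (Z ×ˢ W0).card := h1.symm
    _ ≤ ∑ j ∈ univ.filter (fun j => A j ⊆ Z ∪ W0), ((Z \ A j) ×ˢ (W0 \ A j)).card :=
        le_trans h2 h3
    _ = _ := by
        apply Finset.sum_congr rfl
        intro j _
        rw [Finset.card_product]

/-- The key numeric estimate, where the parity of `r` matters. -/
theorem bound_uv {r u v : ℕ} (huv : u + v ≤ r + 1) (hpar : u + v = r + 1 → u ≠ v) :
    4 * (u * v) ≤ r * r + 2 * r := by
  by_cases h : u + v ≤ r
  · rcases Nat.le_total u v with hle | hle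
    · obtain ⟨d, rfl⟩ : ∃ d, v = u + d := ⟨v - u, by omega⟩
      have hid : (2*u+d)*(2*u+d) = 4*(u*(u+d)) + d*d := by ring
      have h2 : (2*u+d)*(2*u+d) ≤ r*r := Nat.mul_le_mul (by omega) (by omega)
      omega
    · obtain ⟨d, rfl⟩ : ∃ d, u = v + d := ⟨u - v, by omega⟩
      have hid : (2*v+d)*(2*v+d) = 4*((v+d)*v) + d*d := by ring
      have h2 : (2*v+d)*(2*v+d) ≤ r*r := Nat.mul_le_mul (by omega) (by omega)
      omega
  · have hsum : u + v = r + 1 := by omega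
    have hne := hpar hsum
    rcases Nat.lt_or_ge u v with hlt | hge
    · obtain ⟨d, hd1, rfl⟩ : ∃ d, 1 ≤ d ∧ v = u + d := ⟨v - u, by omega, by omega⟩
      have hid : 4 * (u * (u + d)) + d * d = (r+1) * (r+1) := by
        have h2 : 2*u + d = r + 1 := by omega
        calc 4 * (u * (u + d)) + d * d = (2*u+d) * (2*u+d) := by ring
          _ = (r+1) * (r+1) := by rw [h2]
      have h3 : (r+1) * (r+1) = r*r + 2*r + 1 := by ring
      have h4 : 1 ≤ d * d := Nat.one_le_iff_ne_zero.2 (by positivity)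
      omega
    · have hlt : v < u := by omega
      obtain ⟨d, hd1, rfl⟩ : ∃ d, 1 ≤ d ∧ u = v + d := ⟨u - v, by omega, by omega⟩
      have hid : 4 * ((v + d) * v) + d * d = (r+1) * (r+1) := by
        have h2 : 2*v + d = r + 1 := by omega
        calc 4 * ((v + d) * v) + d * d = (2*v+d) * (2*v+d) := by ring
          _ = (r+1) * (r+1) := by rw [h2]
      have h3 : (r+1) * (r+1) = r*r + 2*r + 1 := by ring
      have h4 : 1 ≤ d * d := Nat.one_le_iff_ne_zero.2 (by positivity)
      omega

theorem fin4_cases : ∀ j : Fin 4, j = 0 ∨ j = 1 ∨ j = 2 ∨ j = 3 := by decide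

theorem fin4_other : ∀ j j' : Fin 4, j ≠ j' → ∃ ja jb : Fin 4, ja ≠ jb ∧ ja ≠ j ∧
    ja ≠ j' ∧ jb ≠ j ∧ jb ≠ j' ∧ ∀ x : Fin 4, x = j ∨ x = j' ∨ x = ja ∨ x = jb := by
  decide

theorem solvable_perm {r : ℕ} (X Y : Fin r → Finset ℕ) (A : Fin 4 → Finset ℕ)
    (π : Equiv.Perm (Fin 4)) (h : Solvable X Y (fun j => A (π j))) :
    Solvable X Y A := by
  obtain ⟨f, g, a, h1, h2, h3⟩ := h
  refine ⟨f, g, fun j => a (π.symm j), h1, ?_, fun j i => h3 (π.symm j) i⟩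
  intro j
  have := h2 (π.symm j)
  simpa using this


/-- The `τ = 3` case: an edge inside the 4-part, the other two lists disjoint
and missing the edge color. Hall's condition always holds for the extended system. -/
theorem tau3 {r : ℕ} (X Y : Fin r → Finset ℕ) (A : Fin 4 → Finset ℕ)
    (hX : ∀ i, r + 1 ≤ (X i).card) (hY : ∀ i, r + 1 ≤ (Y i).card)
    (hA : ∀ j, r + 1 ≤ (A j).card)
    (hsplit : ∀ i, X i ∩ Y i = ∅)
    (e : ℕ) (he0 : e ∈ A 0) (he1 : e ∈ A 1)
    (h23 : A 2 ∩ A 3 = ∅) (he2 : e ∉ A 2) (he3 : e ∉ A 3) :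
    Solvable X Y A := by
  classical
  set t : Option (Fin r) × Bool → Finset ℕ :=
    fun p => (match p with
      | (none, true) => A 2
      | (none, false) => A 3
      | (some i, true) => X i
      | (some i, false) => Y i) \ {e} with ht
  have hgen : ∀ S : Finset ℕ, r + 1 ≤ S.card → r ≤ (S \ {e}).card := by
    intro S hS
    have := Finset.le_card_sdiff {e} S
    simp only [card_singleton] at this
    omega
  have hA2e : A 2 \ {e} = A 2 := by
    rw [sdiff_singleton_eq_erase, erase_eq_of_notMem he2]
  have hA3e : A 3 \ {e} = A 3 := by
    rw [sdiff_singleton_eq_erase, erase_eq_of_notMem he3]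
  have hd23 : Disjoint (A 2) (A 3) := by
    rw [Finset.disjoint_iff_inter_eq_empty]; exact h23
  have htc : ∀ p, r ≤ (t p).card := by
    rintro ⟨_ | i, b⟩ <;> cases b
    · exact hgen _ (hA 3)
    · exact hgen _ (hA 2)
    · exact hgen _ (hY i)
    · exact hgen _ (hX i)
  have hall : ∀ s : Finset (Option (Fin r) × Bool), s.card ≤ (s.biUnion t).card := by
    intro s
    rcases s.eq_empty_or_nonempty with rfl | ⟨p0, hp0⟩
    · simp
    have hle : s.card ≤ 2 * (r + 1) := by
      have := Finset.card_le_univ s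
      simp only [card_univ, Fintype.card_prod, Fintype.card_option, Fintype.card_fin,
        Fintype.card_bool] at this
      omega
    by_cases hd : ∃ o, (o, true) ∈ s ∧ (o, false) ∈ s
    · obtain ⟨o, h1, h2⟩ := hd
      have hsub : t (o, true) ∪ t (o, false) ⊆ s.biUnion t :=
        union_subset (subset_biUnion_of_mem t h1) (subset_biUnion_of_mem t h2)
      have hcard2 : 2*r + 1 ≤ (t (o,true) ∪ t (o,false)).card := by
        rcases o with _ | i
        · have heq : t (none, true) ∪ t (none, false) = (A 2 ∪ A 3) \ {e} := by
            show (A 2 \ {e}) ∪ (A 3 \ {e}) = _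
            ext x; simp only [mem_union, mem_sdiff]; tauto
          rw [heq]
          have h2' := Finset.le_card_sdiff {e} (A 2 ∪ A 3)
          have h3' : (A 2 ∪ A 3).card = (A 2).card + (A 3).card :=
            card_union_of_disjoint hd23
          have := hA 2; have := hA 3
          simp only [card_singleton] at h2'
          omega
        · have heq : t (some i, true) ∪ t (some i, false) = (X i ∪ Y i) \ {e} := by
            show (X i \ {e}) ∪ (Y i \ {e}) = _
            ext x; simp only [mem_union, mem_sdiff]; tauto
          rw [heq]
          have h2' := Finset.le_card_sdiff {e} (X i ∪ Y i)
          have hdXY : Disjoint (X i) (Y i) := by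
            rw [Finset.disjoint_iff_inter_eq_empty]; exact hsplit i
          have h3' : (X i ∪ Y i).card = (X i).card + (Y i).card :=
            card_union_of_disjoint hdXY
          have := hX i; have := hY i
          simp only [card_singleton] at h2'
          omega
      by_cases hsc : s.card ≤ 2*r + 1
      · calc s.card ≤ 2*r+1 := hsc
          _ ≤ (t (o,true) ∪ t (o,false)).card := hcard2
          _ ≤ _ := card_le_card hsub
      · have hseq : s = univ := by
          apply Finset.eq_univ_of_card
          simp only [Fintype.card_prod, Fintype.card_option, Fintype.card_fin,
            Fintype.card_bool]
          omega
        have hn1 : (none, true) ∈ s := by rw [hseq]; exact mem_univ _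
        have hn2 : (none, false) ∈ s := by rw [hseq]; exact mem_univ _
        have hsub2 : (A 2 \ {e}) ∪ (A 3 \ {e}) ⊆ s.biUnion t :=
          union_subset (subset_biUnion_of_mem t hn1) (subset_biUnion_of_mem t hn2)
        have hc := card_le_card hsub2
        rw [hA2e, hA3e, card_union_of_disjoint hd23] at hc
        have := hA 2; have := hA 3
        omega
    · push_neg at hd
      have hnodd : ∀ p ∈ s, ∀ q ∈ s, p.1 = q.1 → p = q := by
        rintro ⟨o, b⟩ hp ⟨o', b'⟩ hq h
        simp only at h
        subst h
        cases b <;> cases b'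
        · rfl
        · exact absurd hp (hd o hq)
        · exact absurd hq (hd o hp)
        · rfl
      have hsle : s.card ≤ r + 1 := by
        have h1 : s.card = (s.image Prod.fst).card :=
          (Finset.card_image_of_injOn (fun p hp q hq h => hnodd p hp q hq h)).symm
        rw [h1]
        have := Finset.card_le_univ (s.image Prod.fst)
        simpa [Fintype.card_option] using this
      by_cases hsc : s.card ≤ r
      · calc s.card ≤ r := hsc
          _ ≤ (t p0).card := htc p0
          _ ≤ _ := card_le_card (subset_biUnion_of_mem t hp0)
      · have hseq : s.card = r + 1 := by omega
        have himg : s.image Prod.fst = univ := by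
          apply Finset.eq_univ_of_card
          rw [Finset.card_image_of_injOn (fun p hp q hq h => hnodd p hp q hq h), hseq]
          simp [Fintype.card_option]
        have hmemnone : (none : Option (Fin r)) ∈ s.image Prod.fst := by
          rw [himg]; exact mem_univ _
        obtain ⟨p, hp, hp1⟩ := Finset.mem_image.mp hmemnone
        have hsub : t p ⊆ s.biUnion t := subset_biUnion_of_mem t hp
        have hcard : r + 1 ≤ (t p).card := by
          obtain ⟨o, b⟩ := p
          simp only at hp1
          subst hp1
          cases b
          · show r + 1 ≤ ((A 3) \ {e}).card
            rw [hA3e]; exact hA 3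
          · show r + 1 ≤ ((A 2) \ {e}).card
            rw [hA2e]; exact hA 2
        calc s.card = r + 1 := hseq
          _ ≤ (t p).card := hcard
          _ ≤ _ := card_le_card hsub
  obtain ⟨φ, hinj, hmem⟩ :=
    (Finset.all_card_le_biUnion_card_iff_exists_injective t).1 hall
  have hXm : ∀ i, φ (some i, true) ∈ X i ∧ φ (some i, true) ≠ e := by
    intro i
    have h2 := mem_sdiff.1 (hmem (some i, true))
    exact ⟨h2.1, by simpa using h2.2⟩
  have hYm : ∀ i, φ (some i, false) ∈ Y i ∧ φ (some i, false) ≠ e := by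
    intro i
    have h2 := mem_sdiff.1 (hmem (some i, false))
    exact ⟨h2.1, by simpa using h2.2⟩
  have hA2m : φ (none, true) ∈ A 2 := (mem_sdiff.1 (hmem (none, true))).1
  have hA3m : φ (none, false) ∈ A 3 := (mem_sdiff.1 (hmem (none, false))).1
  refine ⟨fun i => φ (some i, true), fun i => φ (some i, false),
    fun j => if j.val ≤ 1 then e else if j.val = 2 then φ (none, true)
      else φ (none, false),
    ⟨fun i => (hXm i).1, fun i => (hYm i).1, ?_⟩, ?_, ?_⟩
  · intro i i' hne
    refine ⟨fun h => ?_, fun h => ?_, fun h => ?_, fun h => ?_⟩ <;>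
    · have := hinj h
      simp only [Prod.mk.injEq, Option.some.injEq] at this
      tauto
  · intro j
    rcases fin4_cases j with rfl | rfl | rfl | rfl
    · exact he0
    · exact he1
    · exact hA2m
    · exact hA3m
  · intro j i
    rcases fin4_cases j with rfl | rfl | rfl | rfl
    · exact ⟨fun h => (hXm i).2 h.symm, fun h => (hYm i).2 h.symm⟩
    · exact ⟨fun h => (hXm i).2 h.symm, fun h => (hYm i).2 h.symm⟩
    · constructor <;> · intro h; have := hinj h; simp at this
    · constructor <;> · intro h; have := hinj h; simp at this

/-- The `τ = 4` case: the four lists of the 4-part are pairwise disjoint.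
Hall's condition always holds for the system extended by two virtual pairs. -/
theorem tau4 {r : ℕ} (hr : 1 ≤ r) (X Y : Fin r → Finset ℕ) (A : Fin 4 → Finset ℕ)
    (hX : ∀ i, r + 1 ≤ (X i).card) (hY : ∀ i, r + 1 ≤ (Y i).card)
    (hA : ∀ j, r + 1 ≤ (A j).card)
    (hsplit : ∀ i, X i ∩ Y i = ∅)
    (hdA : ∀ j j' : Fin 4, j ≠ j' → A j ∩ A j' = ∅) :
    Solvable X Y A := by
  classical
  have hdisjA : ∀ j j' : Fin 4, j ≠ j' → Disjoint (A j) (A j') := by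
    intro j j' h
    rw [Finset.disjoint_iff_inter_eq_empty]
    exact hdA j j' h
  set t : (Fin r ⊕ Bool) × Bool → Finset ℕ :=
    fun p => (match p with
      | (Sum.inl i, true) => X i
      | (Sum.inl i, false) => Y i
      | (Sum.inr true, true) => A 0
      | (Sum.inr true, false) => A 1
      | (Sum.inr false, true) => A 2
      | (Sum.inr false, false) => A 3) with ht
  set slotOf : Fin 4 → (Fin r ⊕ Bool) × Bool :=
    fun j => (Sum.inr (decide (j.val ≤ 1)), decide (j.val % 2 = 0)) with hslotOf
  have ht_slot : ∀ j, t (slotOf j) = A j := by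
    intro j
    rcases fin4_cases j with rfl | rfl | rfl | rfl <;> rfl
  have hslotne : ∀ ja jb : Fin 4, ja ≠ jb → slotOf ja ≠ slotOf jb := by
    intro ja jb h hcon
    rw [hslotOf] at hcon
    simp only [Prod.ext_iff, Sum.inr.injEq] at hcon
    obtain ⟨c1, c2⟩ := hcon
    rw [decide_eq_decide] at c1 c2
    apply h
    apply Fin.ext
    have ha := ja.isLt; have hb := jb.isLt
    omega
  have htc : ∀ p, r + 1 ≤ (t p).card := by
    rintro ⟨i | b, c⟩ <;> [skip; skip] <;> cases c
    · exact hY i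
    · exact hX i
    all_goals cases b
    · exact hA 3
    · exact hA 1
    · exact hA 2
    · exact hA 0
  have hall : ∀ s : Finset ((Fin r ⊕ Bool) × Bool), s.card ≤ (s.biUnion t).card := by
    intro s
    rcases s.eq_empty_or_nonempty with rfl | ⟨p0, hp0⟩
    · simp
    have hle : s.card ≤ 2 * (r + 2) := by
      have := Finset.card_le_univ s
      simp only [card_univ, Fintype.card_prod, Fintype.card_sum, Fintype.card_fin,
        Fintype.card_bool] at this
      omega
    have hmiss : ∀ qa qb : (Fin r ⊕ Bool) × Bool, qa ≠ qb → qa ∉ s → qb ∉ s →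
        s.card ≤ 2 * r + 2 := by
      intro qa qb hne ha hb
      have hsub : s ⊆ (univ.erase qa).erase qb := by
        intro x hx
        rw [mem_erase, mem_erase]
        exact ⟨fun h => hb (h ▸ hx), fun h => ha (h ▸ hx), mem_univ _⟩
      have hc := card_le_card hsub
      rw [card_erase_of_mem (mem_erase.2 ⟨fun h => hne h.symm, mem_univ _⟩),
        card_erase_of_mem (mem_univ _)] at hc
      simp only [card_univ, Fintype.card_prod, Fintype.card_sum, Fintype.card_fin,
        Fintype.card_bool] at hc
      omega
    by_cases hd : ∃ o, (o, true) ∈ s ∧ (o, false) ∈ s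
    · obtain ⟨o, h1, h2⟩ := hd
      have hdisj : Disjoint (t (o, true)) (t (o, false)) := by
        rcases o with i | b
        · rw [Finset.disjoint_iff_inter_eq_empty]; exact hsplit i
        · cases b
          · exact hdisjA 2 3 (by decide)
          · exact hdisjA 0 1 (by decide)
      have hsub : t (o, true) ∪ t (o, false) ⊆ s.biUnion t :=
        union_subset (subset_biUnion_of_mem t h1) (subset_biUnion_of_mem t h2)
      have hcard2 : 2*r + 2 ≤ (s.biUnion t).card := by
        have hc := card_le_card hsub
        rw [card_union_of_disjoint hdisj] at hc
        have hct := htc (o, true); have hcf := htc (o, false)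
        omega
      by_cases hsc : s.card ≤ 2*r + 2
      · omega
      · -- at least three of the four A-slots are present
        have h3slots : ∃ ja jb jc : Fin 4, ja ≠ jb ∧ ja ≠ jc ∧ jb ≠ jc ∧
            slotOf ja ∈ s ∧ slotOf jb ∈ s ∧ slotOf jc ∈ s := by
          by_cases m0 : slotOf 0 ∈ s <;> by_cases m1 : slotOf 1 ∈ s <;>
            by_cases m2 : slotOf 2 ∈ s <;> by_cases m3 : slotOf 3 ∈ s
          all_goals first
            | (exact ⟨0, 1, 2, by decide, by decide, by decide, m0, m1, m2⟩)
            | (exact ⟨0, 1, 3, by decide, by decide, by decide, m0, m1, m3⟩)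
            | (exact ⟨0, 2, 3, by decide, by decide, by decide, m0, m2, m3⟩)
            | (exact ⟨1, 2, 3, by decide, by decide, by decide, m1, m2, m3⟩)
            | (exact absurd (hmiss _ _ (hslotne 0 1 (by decide)) m0 m1) (by omega))
            | (exact absurd (hmiss _ _ (hslotne 0 2 (by decide)) m0 m2) (by omega))
            | (exact absurd (hmiss _ _ (hslotne 0 3 (by decide)) m0 m3) (by omega))
            | (exact absurd (hmiss _ _ (hslotne 1 2 (by decide)) m1 m2) (by omega))
            | (exact absurd (hmiss _ _ (hslotne 1 3 (by decide)) m1 m3) (by omega))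
            | (exact absurd (hmiss _ _ (hslotne 2 3 (by decide)) m2 m3) (by omega))
        obtain ⟨ja, jb, jc, hab, hac, hbc, ma, mb, mc⟩ := h3slots
        have hsub3 : A ja ∪ A jb ∪ A jc ⊆ s.biUnion t := by
          refine union_subset (union_subset ?_ ?_) ?_
          · rw [← ht_slot ja]; exact subset_biUnion_of_mem t ma
          · rw [← ht_slot jb]; exact subset_biUnion_of_mem t mb
          · rw [← ht_slot jc]; exact subset_biUnion_of_mem t mc
        have hc3 := card_le_card hsub3
        rw [card_union_of_disjoint (by
            rw [Finset.disjoint_union_left]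
            exact ⟨hdisjA ja jc hac, hdisjA jb jc hbc⟩),
          card_union_of_disjoint (hdisjA ja jb hab)] at hc3
        have := hA ja; have := hA jb; have := hA jc
        omega
    · push_neg at hd
      have hnodd : ∀ p ∈ s, ∀ q ∈ s, p.1 = q.1 → p = q := by
        rintro ⟨o, b⟩ hp ⟨o', b'⟩ hq h
        simp only at h
        subst h
        cases b <;> cases b'
        · rfl
        · exact absurd hp (hd o hq)
        · exact absurd hq (hd o hp)
        · rfl
      have hsle : s.card ≤ r + 2 := by
        have h1 : s.card = (s.image Prod.fst).card :=
          (Finset.card_image_of_injOn (fun p hp q hq h => hnodd p hp q hq h)).symm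
        rw [h1]
        have := Finset.card_le_univ (s.image Prod.fst)
        simpa [Fintype.card_sum] using this
      by_cases hsc : s.card ≤ r + 1
      · calc s.card ≤ r + 1 := hsc
          _ ≤ (t p0).card := htc p0
          _ ≤ _ := card_le_card (subset_biUnion_of_mem t hp0)
      · have hseq : s.card = r + 2 := by omega
        have himg : s.image Prod.fst = univ := by
          apply Finset.eq_univ_of_card
          rw [Finset.card_image_of_injOn (fun p hp q hq h => hnodd p hp q hq h), hseq]
          simp [Fintype.card_sum]
        have hmem1 : (Sum.inr true : Fin r ⊕ Bool) ∈ s.image Prod.fst := by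
          rw [himg]; exact mem_univ _
        have hmem2 : (Sum.inr false : Fin r ⊕ Bool) ∈ s.image Prod.fst := by
          rw [himg]; exact mem_univ _
        obtain ⟨p, hp, hp1⟩ := Finset.mem_image.mp hmem1
        obtain ⟨q, hq, hq1⟩ := Finset.mem_image.mp hmem2
        have hpj : ∃ j : Fin 4, t p = A j ∧ j.val ≤ 1 := by
          obtain ⟨o, b⟩ := p
          simp only at hp1
          subst hp1
          cases b
          · exact ⟨1, rfl, by decide⟩
          · exact ⟨0, rfl, by decide⟩
        have hqj : ∃ j : Fin 4, t q = A j ∧ 2 ≤ j.val := by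
          obtain ⟨o, b⟩ := q
          simp only at hq1
          subst hq1
          cases b
          · exact ⟨3, rfl, by decide⟩
          · exact ⟨2, rfl, by decide⟩
        obtain ⟨j1, hj1, hj1v⟩ := hpj
        obtain ⟨j2, hj2, hj2v⟩ := hqj
        have hsub2 : A j1 ∪ A j2 ⊆ s.biUnion t := by
          refine union_subset ?_ ?_
          · rw [← hj1]; exact subset_biUnion_of_mem t hp
          · rw [← hj2]; exact subset_biUnion_of_mem t hq
        have hc2 := card_le_card hsub2
        rw [card_union_of_disjoint (hdisjA j1 j2 (by
            intro h; rw [h] at hj1v; omega))] at hc2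
        have := hA j1; have := hA j2
        omega
  obtain ⟨φ, hinj, hmem⟩ :=
    (Finset.all_card_le_biUnion_card_iff_exists_injective t).1 hall
  refine ⟨fun i => φ (Sum.inl i, true), fun i => φ (Sum.inl i, false),
    fun j => φ (slotOf j), ⟨fun i => hmem (Sum.inl i, true),
      fun i => hmem (Sum.inl i, false), ?_⟩, ?_, ?_⟩
  · intro i i' hne
    refine ⟨fun h => ?_, fun h => ?_, fun h => ?_, fun h => ?_⟩ <;>
    · have := hinj h
      simp only [Prod.mk.injEq, Sum.inl.injEq] at this
      tauto
  · intro j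
    rw [← ht_slot j]
    exact hmem (slotOf j)
  · intro j i
    constructor <;>
    · intro h
      have := hinj h
      rcases fin4_cases j with rfl | rfl | rfl | rfl <;>
        simp [hslotOf, Prod.ext_iff] at this


theorem enum_of_card {r : ℕ} (S : Finset ℕ) (h : S.card = r) :
    ∃ R : Fin r → ℕ, Function.Injective R ∧ ∀ i, R i ∈ S := by
  refine ⟨fun i => (S.equivFin.symm (Fin.cast h.symm i) : ℕ), ?_,
    fun i => (S.equivFin.symm _).2⟩
  intro i i' hii
  have h1 := Subtype.coe_injective hii
  have h2 := S.equivFin.symm.injective h1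
  exact Fin.ext (by simpa using congrArg Fin.val h2)

theorem bound_sq {n u v : ℕ} (h : u + v ≤ n) : 4 * (u * v) ≤ n * n := by
  rcases Nat.le_total u v with hle | hle
  · obtain ⟨d, rfl⟩ : ∃ d, v = u + d := ⟨v - u, by omega⟩
    have hid : (2*u+d)*(2*u+d) = 4*(u*(u+d)) + d*d := by ring
    have h2 : (2*u+d)*(2*u+d) ≤ n*n := Nat.mul_le_mul (by omega) (by omega)
    omega
  · obtain ⟨d, rfl⟩ : ∃ d, u = v + d := ⟨u - v, by omega⟩
    have hid : (2*v+d)*(2*v+d) = 4*((v+d)*v) + d*d := by ring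
    have h2 : (2*v+d)*(2*v+d) ≤ n*n := Nat.mul_le_mul (by omega) (by omega)
    omega

theorem W : ∀ r : ℕ, ∀ (X Y : Fin r → Finset ℕ) (A : Fin 4 → Finset ℕ),
    (∀ i, r + 1 ≤ (X i).card) → (∀ i, r + 1 ≤ (Y i).card) →
    (∀ j, r + 1 ≤ (A j).card) →
    (Even r ∨ ((∃ i, r + 2 ≤ (X i).card ∨ r + 2 ≤ (Y i).card) ∨
      ∃ j, r + 2 ≤ (A j).card)) →
    Solvable X Y A := by
  intro r
  induction r using Nat.strong_induction_on with
  | _ r IH =>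
  intro X Y A hX hY hA hpar
  classical
  rcases Nat.eq_zero_or_pos r with rfl | hr1
  · exact ⟨fun _ => 0, fun _ => 0,
      fun j => (A j).min' (card_pos.mp (by have := hA j; omega)),
      ⟨fun i => i.elim0, fun i => i.elim0, fun i => i.elim0⟩,
      fun j => Finset.min'_mem _ _, fun j i => i.elim0⟩
  by_cases hjoint : ∃ i e, e ∈ X i ∩ Y i
  -- Case 1 : some pair has a common color
  · obtain ⟨i0, e, he⟩ := hjoint
    rw [mem_inter] at he
    by_cases hea : ∀ j, e ∈ A j
    · exact solvable_of_common X Y A e hea hX hY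
    · push_neg at hea
      obtain ⟨j0, hj0⟩ := hea
      obtain ⟨r', rfl⟩ : ∃ r', r = r' + 1 := ⟨r - 1, by omega⟩
      have hsd : ∀ S : Finset ℕ, S.card - 1 ≤ (S \ {e}).card := by
        intro S
        have := Finset.le_card_sdiff {e} S
        simp only [card_singleton] at this
        omega
      set emb := i0.succAbove with hemb
      obtain ⟨f', g', a', ⟨hf'm, hg'm, hd'⟩, ha'm, ha'd⟩ :=
        IH r' (by omega) (fun i => X (emb i) \ {e}) (fun i => Y (emb i) \ {e})
          (fun j => A j \ {e})
          (fun i => by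
            show r' + 1 ≤ ((X (emb i)) \ {e}).card
            have := hX (emb i); have := hsd (X (emb i)); omega)
          (fun i => by
            show r' + 1 ≤ ((Y (emb i)) \ {e}).card
            have := hY (emb i); have := hsd (Y (emb i)); omega)
          (fun j => by
            show r' + 1 ≤ ((A j) \ {e}).card
            have := hA j; have := hsd (A j); omega)
          (Or.inr (Or.inr ⟨j0, by
            show r' + 2 ≤ ((A j0) \ {e}).card
            rw [sdiff_singleton_eq_erase, erase_eq_of_notMem hj0]
            have := hA j0; omega⟩))
      have hinv : ∀ i : Fin (r' + 1), i ≠ i0 → ∃ j, emb j = i := by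
        intro i hi
        exact Fin.exists_succAbove_eq hi
      set fi : Fin (r' + 1) → ℕ :=
        fun i => if h : i = i0 then e else f' (hinv i h).choose with hfi
      set gi : Fin (r' + 1) → ℕ :=
        fun i => if h : i = i0 then e else g' (hinv i h).choose with hgi
      have hfval : ∀ (i) (h : i ≠ i0), fi i = f' (hinv i h).choose := by
        intro i h; rw [hfi]; simp only [dif_neg h]
      have hgval : ∀ (i) (h : i ≠ i0), gi i = g' (hinv i h).choose := by
        intro i h; rw [hgi]; simp only [dif_neg h]
      have hfi0 : fi i0 = e := by rw [hfi]; simp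
      have hgi0 : gi i0 = e := by rw [hgi]; simp
      have hfX : ∀ (i) (h : i ≠ i0), fi i ∈ X i ∧ fi i ≠ e := by
        intro i h
        rw [hfval i h]
        have h1 : f' (hinv i h).choose ∈ X (emb (hinv i h).choose) \ {e} :=
          hf'm (hinv i h).choose
        rw [(hinv i h).choose_spec] at h1
        rw [mem_sdiff, mem_singleton] at h1
        exact h1
      have hgY : ∀ (i) (h : i ≠ i0), gi i ∈ Y i ∧ gi i ≠ e := by
        intro i h
        rw [hgval i h]
        have h1 : g' (hinv i h).choose ∈ Y (emb (hinv i h).choose) \ {e} :=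
          hg'm (hinv i h).choose
        rw [(hinv i h).choose_spec] at h1
        rw [mem_sdiff, mem_singleton] at h1
        exact h1
      have hchinj : ∀ (i i' : Fin (r' + 1)) (h : i ≠ i0) (h' : i' ≠ i0), i ≠ i' →
          (hinv i h).choose ≠ (hinv i' h').choose := by
        intro i i' h h' hne hc
        apply hne
        rw [← (hinv i h).choose_spec, ← (hinv i' h').choose_spec, hc]
      refine ⟨fi, gi, a', ⟨?_, ?_, ?_⟩, fun j => (mem_sdiff.1 (ha'm j)).1, ?_⟩
      · intro i
        by_cases h : i = i0
        · rw [h, hfi0]; exact he.1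
        · exact (hfX i h).1
      · intro i
        by_cases h : i = i0
        · rw [h, hgi0]; exact he.2
        · exact (hgY i h).1
      · intro i i' hne
        by_cases h : i = i0
        · subst h
          have h' : i' ≠ i := hne.symm
          rw [hfi0, hgi0]
          exact ⟨fun hc => (hfX i' h').2 hc.symm, fun hc => (hgY i' h').2 hc.symm,
            fun hc => (hfX i' h').2 hc.symm, fun hc => (hgY i' h').2 hc.symm⟩
        · by_cases h' : i' = i0
          · subst h'
            rw [hfi0, hgi0]
            exact ⟨fun hc => (hfX i h).2 hc, fun hc => (hfX i h).2 hc,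
              fun hc => (hgY i h).2 hc, fun hc => (hgY i h).2 hc⟩
          · rw [hfval i h, hfval i' h', hgval i h, hgval i' h']
            exact hd' _ _ (hchinj i i' h h' hne)
      · intro j i
        by_cases h : i = i0
        · rw [h, hfi0, hgi0]
          have h1 := (mem_sdiff.1 (ha'm j)).2
          rw [mem_singleton] at h1
          exact ⟨h1, h1⟩
        · rw [hfval i h, hgval i h]
          exact ha'd j _
  -- all pairs split from here on
  · push_neg at hjoint
    have hsplit : ∀ i, X i ∩ Y i = ∅ := by
      intro i
      rw [Finset.eq_empty_iff_forall_notMem]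
      exact fun e he => hjoint i e he
    by_cases hcov2 : ∃ c d : ℕ, ∀ j, c ∈ A j ∨ d ∈ A j
    -- Case 2 : a 2-element cover of the 4-part exists
    · obtain ⟨c, d, hcd⟩ := hcov2
      by_cases hHall : ∀ s : Finset (Fin r × Bool),
          s.card ≤ (s.biUnion (fun p => (if p.2 then X p.1 else Y p.1) \ ({c, d} : Finset ℕ))).card
      · obtain ⟨f, g, hok, havoid⟩ := pairok_SDR X Y {c, d} hHall
        refine ⟨f, g, fun j => if c ∈ A j then c else d, hok, ?_, ?_⟩
        · intro j
          by_cases h : c ∈ A j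
          · simp only [if_pos h]; exact h
          · simp only [if_neg h]
            rcases hcd j with h' | h'
            · exact absurd h' h
            · exact h'
        · intro j i
          have h1 := (havoid i).1
          have h2 := (havoid i).2
          have hcF : c ∈ ({c, d} : Finset ℕ) := by simp
          have hdF : d ∈ ({c, d} : Finset ℕ) := by simp
          by_cases h : c ∈ A j
          · simp only [if_pos h]
            exact ⟨fun hh => h1 (hh ▸ hcF), fun hh => h2 (hh ▸ hcF)⟩
          · simp only [if_neg h]
            exact ⟨fun hh => h1 (hh ▸ hdF), fun hh => h2 (hh ▸ hdF)⟩
      · obtain ⟨z, C, hCcard, _, hCF, hFcard, hside⟩ :=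
          violation_structure X Y {c, d} hX hY hsplit
            ((card_insert_le c {d}).trans (by simp)) hHall
        set Z := C ∪ ({c, d} : Finset ℕ) with hZdef
        have hZcard : Z.card = r + 1 := by
          rw [hZdef, card_union_of_disjoint hCF, hCcard, hFcard]
          omega
        have hcZ : c ∈ Z := by rw [hZdef]; simp
        have hdZ : d ∈ Z := by rw [hZdef]; simp
        set Ys : Fin r → Finset ℕ := fun i => if z i then Y i else X i with hYsdef
        have hYscard : ∀ i, r + 1 ≤ (Ys i).card := by
          intro i
          rw [hYsdef]
          by_cases hzi : z i
          · simp only [if_pos hzi]; exact hY i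
          · simp only [if_neg hzi]; exact hX i
        have hYsZ : ∀ i, ∀ x ∈ Ys i, x ∉ Z := by
          intro i x hx hxZ
          have hXs := hside i
          rw [hYsdef] at hx
          by_cases hzi : z i
          · simp only [if_pos hzi] at hx
            rw [if_pos hzi] at hXs
            have : x ∈ X i ∩ Y i := mem_inter.2 ⟨by rw [hXs]; exact hxZ, hx⟩
            rw [hsplit i] at this
            exact absurd this (notMem_empty x)
          · simp only [if_neg hzi] at hx
            rw [if_neg hzi] at hXs
            have : x ∈ X i ∩ Y i := mem_inter.2 ⟨hx, by rw [hXs]; exact hxZ⟩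
            rw [hsplit i] at this
            exact absurd this (notMem_empty x)
        by_cases hYeq : ∀ i i' : Fin r, Ys i = Ys i'
        -- Case 2A : all partner lists are equal
        · set Yall := Ys ⟨0, hr1⟩ with hYalldef
          have hYallZ : ∀ x ∈ Yall, x ∉ Z := fun x hx => hYsZ _ x hx
          -- choose W0 (possibly avoiding a color γ) depending on the parity branch
          have hYallcard : r + 1 ≤ Yall.card := hYscard ⟨0, hr1⟩
          have hone : 1 ≤ (r+1)*(r+1) := Nat.one_le_iff_ne_zero.2 (by positivity)
          have hq : (r+1)*(r+1) = r*r + 2*r + 1 := by ring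
          have huvgen : ∀ W0 : Finset ℕ, W0 ⊆ Yall → W0.card = r + 1 → ∀ j,
              A j ⊆ Z ∪ W0 →
              (Z \ A j).card + (W0 \ A j).card + (A j).card ≤ 2*(r+1) := by
            intro W0 hW0sub hW0card j hsubj
            have e1 := Finset.card_sdiff_add_card_inter Z (A j)
            have e2 := Finset.card_sdiff_add_card_inter W0 (A j)
            have e3 : (A j).card ≤ (Z ∩ A j).card + (W0 ∩ A j).card := by
              have hs : A j ⊆ (Z ∩ A j) ∪ (W0 ∩ A j) := by
                intro x hx
                have := hsubj hx
                rw [mem_union] at this ⊢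
                rcases this with h | h
                · exact Or.inl (mem_inter.2 ⟨h, hx⟩)
                · exact Or.inr (mem_inter.2 ⟨h, hx⟩)
              exact (card_le_card hs).trans (card_union_le _ _)
            have := hZcard
            omega
          have hJ4 : ∀ W0 : Finset ℕ,
              (univ.filter (fun j => A j ⊆ Z ∪ W0)).card ≤ 4 := by
            intro W0
            have := Finset.card_filter_le (univ : Finset (Fin 4))
              (fun j => A j ⊆ Z ∪ W0)
            simpa using this
          have hkey : ∃ W0 : Finset ℕ, W0 ⊆ Yall ∧ W0.card = r + 1 ∧
              ¬ (∀ zs ∈ Z, ∀ y ∈ W0, ∃ j, zs ∉ A j ∧ y ∉ A j ∧ A j ⊆ Z ∪ W0) := by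
            rcases hpar with heven | hbig
            -- even r : the tight count
            · obtain ⟨W0, hW0sub, hW0card⟩ := Finset.exists_subset_card_eq (s := Yall) (n := r+1) hYallcard
              refine ⟨W0, hW0sub, hW0card, ?_⟩
              intro hcov
              have hcount := count2A A Z W0 hZcard hW0card hcov
              obtain ⟨tt, htt⟩ := heven
              have h5 : ∑ j ∈ univ.filter (fun j => A j ⊆ Z ∪ W0),
                  4 * ((Z \ A j).card * (W0 \ A j).card) ≤
                  ∑ _j ∈ univ.filter (fun j => A j ⊆ Z ∪ W0), (r*r + 2*r) := by
                apply Finset.sum_le_sum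
                intro j hj
                have hsubj := (mem_filter.1 hj).2
                have h6 := huvgen W0 hW0sub hW0card j hsubj
                have h7 := hA j
                apply bound_uv (by omega)
                intro hsum hequv
                omega
              have h4 : 4 * ((r+1)*(r+1)) ≤ ∑ j ∈ univ.filter (fun j => A j ⊆ Z ∪ W0),
                  4 * ((Z \ A j).card * (W0 \ A j).card) := by
                rw [← Finset.mul_sum]
                exact Nat.mul_le_mul_left 4 hcount
              rw [Finset.sum_const, smul_eq_mul] at h5
              have h8 : (univ.filter (fun j => A j ⊆ Z ∪ W0)).card * (r*r + 2*r) ≤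
                  4 * (r*r + 2*r) := Nat.mul_le_mul_right _ (hJ4 W0)
              omega
            · rcases hbig with ⟨ib, hb⟩ | ⟨j0, hb⟩
              -- a big pair list : the partner list is big
              · have hYallbig : r + 2 ≤ Yall.card := by
                  have hsz : (if z ib then X ib else Y ib).card = r + 1 := by
                    rw [hside ib, hZcard]
                  have hyse : Ys ib = Yall := hYeq ib ⟨0, hr1⟩
                  rcases hb with hbX | hbY
                  · by_cases hzi : z ib
                    · exfalso; rw [if_pos hzi] at hsz; omega
                    · have h9 : Ys ib = X ib := by
                        rw [hYsdef]; simp only [if_neg hzi]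
                      rw [← hyse, h9]; exact hbX
                  · by_cases hzi : z ib
                    · have h9 : Ys ib = Y ib := by
                        rw [hYsdef]; simp only [if_pos hzi]
                      rw [← hyse, h9]; exact hbY
                    · exfalso; rw [if_neg hzi] at hsz; omega
                by_cases hgam : ∃ j γ, γ ∈ A j ∧ γ ∉ Z ∧ γ ∈ Yall
                · obtain ⟨j0, γ, hγA, hγZ, hγY⟩ := hgam
                  obtain ⟨W0, hW0sub', hW0card⟩ := Finset.exists_subset_card_eq
                    (s := (Yall.erase γ)) (n := r+1) (by rw [card_erase_of_mem hγY]; omega)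
                  refine ⟨W0, fun x hx => mem_of_mem_erase (hW0sub' hx), hW0card, ?_⟩
                  intro hcov
                  have hcount := count2A A Z W0 hZcard hW0card hcov
                  have hj0 : j0 ∉ univ.filter (fun j => A j ⊆ Z ∪ W0) := by
                    simp only [mem_filter, mem_univ, true_and]
                    intro hsub'
                    have h10 := hsub' hγA
                    rw [mem_union] at h10
                    rcases h10 with h | h
                    · exact hγZ h
                    · exact (mem_erase.1 (hW0sub' h)).1 rfl
                  have hJ3 : (univ.filter (fun j => A j ⊆ Z ∪ W0)).card ≤ 3 := by
                    have hsubJ : univ.filter (fun j => A j ⊆ Z ∪ W0) ⊆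
                        univ.erase j0 := by
                      intro x hx
                      rw [mem_erase]
                      exact ⟨fun hc => hj0 (hc ▸ hx), mem_univ _⟩
                    have h11 := card_le_card hsubJ
                    rw [card_erase_of_mem (mem_univ _)] at h11
                    simpa using h11
                  have h5 : ∑ j ∈ univ.filter (fun j => A j ⊆ Z ∪ W0),
                      4 * ((Z \ A j).card * (W0 \ A j).card) ≤
                      ∑ _j ∈ univ.filter (fun j => A j ⊆ Z ∪ W0), ((r+1)*(r+1)) := by
                    apply Finset.sum_le_sum
                    intro j hj
                    have hsubj := (mem_filter.1 hj).2
                    have h6 := huvgen W0 (fun x hx => mem_of_mem_erase (hW0sub' hx))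
                      hW0card j hsubj
                    have h7 := hA j
                    exact bound_sq (by omega)
                  have h4 : 4 * ((r+1)*(r+1)) ≤
                      ∑ j ∈ univ.filter (fun j => A j ⊆ Z ∪ W0),
                      4 * ((Z \ A j).card * (W0 \ A j).card) := by
                    rw [← Finset.mul_sum]
                    exact Nat.mul_le_mul_left 4 hcount
                  rw [Finset.sum_const, smul_eq_mul] at h5
                  have h8 : (univ.filter (fun j => A j ⊆ Z ∪ W0)).card * ((r+1)*(r+1)) ≤
                      3 * ((r+1)*(r+1)) := Nat.mul_le_mul_right _ hJ3
                  omega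
                · push_neg at hgam
                  obtain ⟨W0, hW0sub, hW0card⟩ :=
                    Finset.exists_subset_card_eq (s := Yall) (n := r+1) hYallcard
                  refine ⟨W0, hW0sub, hW0card, ?_⟩
                  intro hcov
                  have hcount := count2A A Z W0 hZcard hW0card hcov
                  have hzero : ∑ j ∈ univ.filter (fun j => A j ⊆ Z ∪ W0),
                      ((Z \ A j).card * (W0 \ A j).card) = 0 := by
                    apply Finset.sum_eq_zero
                    intro j hj
                    have hsub' := (mem_filter.1 hj).2
                    have hAZ : A j ⊆ Z := by
                      intro x hx
                      by_contra hxZ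
                      have hx2 := hsub' hx
                      rw [mem_union] at hx2
                      rcases hx2 with h | h
                      · exact hxZ h
                      · exact hgam j x hx hxZ (hW0sub h)
                    have hAeq : A j = Z := Finset.eq_of_subset_of_card_le hAZ
                      (by rw [hZcard]; exact hA j)
                    have h12 : Z \ A j = ∅ := by rw [hAeq]; simp
                    rw [h12]
                    simp
                  rw [hzero] at hcount
                  omega
              -- a big list in the 4-part
              · obtain ⟨W0, hW0sub, hW0card⟩ :=
                  Finset.exists_subset_card_eq (s := Yall) (n := r+1) hYallcard
                refine ⟨W0, hW0sub, hW0card, ?_⟩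
                intro hcov
                have hcount := count2A A Z W0 hZcard hW0card hcov
                have h5 : ∑ j ∈ univ.filter (fun j => A j ⊆ Z ∪ W0),
                    4 * ((Z \ A j).card * (W0 \ A j).card) ≤
                    ∑ j ∈ univ.filter (fun j => A j ⊆ Z ∪ W0),
                      (if j = j0 then r*r else (r+1)*(r+1)) := by
                  apply Finset.sum_le_sum
                  intro j hj
                  have hsubj := (mem_filter.1 hj).2
                  have h6 := huvgen W0 hW0sub hW0card j hsubj
                  by_cases hjj : j = j0
                  · rw [if_pos hjj]
                    subst hjj
                    exact bound_sq (by omega)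
                  · rw [if_neg hjj]
                    have h7 := hA j
                    exact bound_sq (by omega)
                have h5' : ∑ j ∈ univ.filter (fun j => A j ⊆ Z ∪ W0),
                    (if j = j0 then r*r else (r+1)*(r+1)) ≤
                    ∑ j : Fin 4, (if j = j0 then r*r else (r+1)*(r+1)) := by
                  apply Finset.sum_le_sum_of_subset (Finset.filter_subset _ _)
                have h5'' : ∑ j : Fin 4, (if j = j0 then r*r else (r+1)*(r+1)) ≤
                    r*r + 3 * ((r+1)*(r+1)) := by
                  rw [Fin.sum_univ_four]
                  rcases fin4_cases j0 with rfl | rfl | rfl | rfl <;>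
                    simp <;> omega
                have h4 : 4 * ((r+1)*(r+1)) ≤
                    ∑ j ∈ univ.filter (fun j => A j ⊆ Z ∪ W0),
                    4 * ((Z \ A j).card * (W0 \ A j).card) := by
                  rw [← Finset.mul_sum]
                  exact Nat.mul_le_mul_left 4 hcount
                omega
          obtain ⟨W0, hW0sub, hW0card, hW0good⟩ := hkey
          push_neg at hW0good
          obtain ⟨zs, hzs, y, hy, hgood⟩ := hW0good
          obtain ⟨R, hRinj, hRmem⟩ := enum_of_card (W0.erase y)
            (by rw [card_erase_of_mem hy, hW0card])
          apply solvable_of_Zstruct X Y A z Z hside hZcard zs hzs R hRinj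
          · intro i
            have h1 : R i ∈ Yall := hW0sub (mem_of_mem_erase (hRmem i))
            rw [hYalldef] at h1
            rw [hYeq ⟨0, hr1⟩ i] at h1
            rw [hYsdef] at h1
            exact h1
          · intro i
            exact hYallZ _ (hW0sub (mem_of_mem_erase (hRmem i)))
          · intro j
            have hj := hgood j
            by_cases h1 : zs ∈ A j
            · exact ⟨zs, h1, Or.inl rfl⟩
            · by_cases h2 : y ∈ A j
              · refine ⟨y, h2, Or.inr ⟨hYallZ _ (hW0sub hy), ?_⟩⟩
                intro i hc
                exact (mem_erase.1 (hRmem i)).1 hc.symm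
              · have h3 : ¬ A j ⊆ Z ∪ W0 := hj h1 h2
                obtain ⟨α, hα1, hα2⟩ := Finset.not_subset.1 h3
                rw [mem_union] at hα2
                push_neg at hα2
                refine ⟨α, hα1, Or.inr ⟨hα2.1, ?_⟩⟩
                intro i hc
                exact hα2.2 (by rw [hc]; exact mem_of_mem_erase (hRmem i))
        -- Case 2B : two different partner lists
        · push_neg at hYeq
          obtain ⟨ib0, ib1, hYne⟩ := hYeq
          have havail : ∀ t1 t2 : ℕ, ∃ R : Fin r → ℕ, Function.Injective R ∧
              ∀ i, R i ∈ (Ys i) \ ({t1, t2} : Finset ℕ) := by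
            intro t1 t2
            exact SDR_single Ys {t1, t2} hYscard
              ((card_insert_le t1 {t2}).trans (by simp))
              (fun hcon => hYne (hcon ib0 ib1))
          have hclaim : ∃ zs ∈ Z, ∃ t1 t2 : ℕ, ∀ j, zs ∈ A j ∨
              (t1 ∈ A j ∧ t1 ∉ Z) ∨ (t2 ∈ A j ∧ t2 ∉ Z) := by
            by_contra hcon
            push_neg at hcon
            have hD1 : ∀ j : Fin 4, ∃ zc, zc ∈ A j ∧ zc ∈ Z := by
              intro j
              rcases hcd j with h | h
              · exact ⟨c, h, hcZ⟩
              · exact ⟨d, h, hdZ⟩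
            have hD2a : ∀ j j' : Fin 4, j ≠ j' → ∀ γ,
                ¬(γ ∈ A j ∧ γ ∉ Z ∧ γ ∈ A j') := by
              rintro j j' hne γ ⟨hγj, hγZ, hγj'⟩
              obtain ⟨ja, jb, hab, haj, haj', hbj, hbj', hcover⟩ := fin4_other j j' hne
              by_cases hb : ∃ t2, t2 ∈ A jb ∧ t2 ∉ Z
              · obtain ⟨t2, ht2, ht2Z⟩ := hb
                obtain ⟨zc, hzcA, hzcZ⟩ := hD1 ja
                obtain ⟨j0, h1, h2, h3⟩ := hcon zc hzcZ γ t2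
                rcases hcover j0 with rfl | rfl | rfl | rfl
                · exact hγZ (h2 hγj)
                · exact hγZ (h2 hγj')
                · exact h1 hzcA
                · exact ht2Z (h3 ht2)
              · push_neg at hb
                have hjbZ : A jb = Z := by
                  apply Finset.eq_of_subset_of_card_le (fun x hx => hb x hx)
                  rw [hZcard]
                  exact hA jb
                obtain ⟨zc, hzcA, hzcZ⟩ := hD1 ja
                obtain ⟨j0, h1, h2, h3⟩ := hcon zc hzcZ γ γ
                rcases hcover j0 with rfl | rfl | rfl | rfl
                · exact hγZ (h2 hγj)
                · exact hγZ (h2 hγj')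
                · exact h1 hzcA
                · exact h1 (by rw [hjbZ]; exact hzcZ)
            have hD2b : ∀ j j' : Fin 4, j ≠ j' → ∀ γ,
                ¬(γ ∈ A j ∧ γ ∈ Z ∧ γ ∈ A j') := by
              rintro j j' hne γ ⟨hγj, hγZ, hγj'⟩
              obtain ⟨ja, jb, hab, haj, haj', hbj, hbj', hcover⟩ := fin4_other j j' hne
              by_cases ha' : ∃ t1, t1 ∈ A ja ∧ t1 ∉ Z
              · obtain ⟨t1, ht1, ht1Z⟩ := ha'
                by_cases hb' : ∃ t2, t2 ∈ A jb ∧ t2 ∉ Z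
                · obtain ⟨t2, ht2, ht2Z⟩ := hb'
                  obtain ⟨j0, h1, h2, h3⟩ := hcon γ hγZ t1 t2
                  rcases hcover j0 with rfl | rfl | rfl | rfl
                  · exact h1 hγj
                  · exact h1 hγj'
                  · exact ht1Z (h2 ht1)
                  · exact ht2Z (h3 ht2)
                · push_neg at hb'
                  have hjbZ : A jb = Z := by
                    apply Finset.eq_of_subset_of_card_le (fun x hx => hb' x hx)
                    rw [hZcard]
                    exact hA jb
                  obtain ⟨j0, h1, h2, h3⟩ := hcon γ hγZ t1 t1
                  rcases hcover j0 with rfl | rfl | rfl | rfl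
                  · exact h1 hγj
                  · exact h1 hγj'
                  · exact ht1Z (h2 ht1)
                  · exact h1 (by rw [hjbZ]; exact hγZ)
              · push_neg at ha'
                have hjaZ : A ja = Z := by
                  apply Finset.eq_of_subset_of_card_le (fun x hx => ha' x hx)
                  rw [hZcard]
                  exact hA ja
                by_cases hb' : ∃ t2, t2 ∈ A jb ∧ t2 ∉ Z
                · obtain ⟨t2, ht2, ht2Z⟩ := hb'
                  obtain ⟨j0, h1, h2, h3⟩ := hcon γ hγZ t2 t2
                  rcases hcover j0 with rfl | rfl | rfl | rfl
                  · exact h1 hγj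
                  · exact h1 hγj'
                  · exact h1 (by rw [hjaZ]; exact hγZ)
                  · exact ht2Z (h2 ht2)
                · push_neg at hb'
                  have hjbZ : A jb = Z := by
                    apply Finset.eq_of_subset_of_card_le (fun x hx => hb' x hx)
                    rw [hZcard]
                    exact hA jb
                  obtain ⟨j0, h1, h2, h3⟩ := hcon γ hγZ γ γ
                  rcases hcover j0 with rfl | rfl | rfl | rfl
                  · exact h1 hγj
                  · exact h1 hγj'
                  · exact h1 (by rw [hjaZ]; exact hγZ)
                  · exact h1 (by rw [hjbZ]; exact hγZ)
            have hD3 : ∀ j j' : Fin 4, j ≠ j' → ∀ γ, ¬(γ ∈ A j ∧ γ ∈ A j') := by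
              rintro j j' hne γ ⟨h1', h2'⟩
              by_cases hγZ : γ ∈ Z
              · exact hD2b j j' hne γ ⟨h1', hγZ, h2'⟩
              · exact hD2a j j' hne γ ⟨h1', hγZ, h2'⟩
            rcases hcd 0 with h0 | h0 <;> rcases hcd 1 with h1' | h1' <;>
              rcases hcd 2 with h2' | h2'
            · exact hD3 0 1 (by decide) c ⟨h0, h1'⟩
            · exact hD3 0 1 (by decide) c ⟨h0, h1'⟩
            · exact hD3 0 2 (by decide) c ⟨h0, h2'⟩
            · exact hD3 1 2 (by decide) d ⟨h1', h2'⟩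
            · exact hD3 1 2 (by decide) c ⟨h1', h2'⟩
            · exact hD3 0 2 (by decide) d ⟨h0, h2'⟩
            · exact hD3 0 1 (by decide) d ⟨h0, h1'⟩
            · exact hD3 0 1 (by decide) d ⟨h0, h1'⟩
          obtain ⟨zs, hzs, t1, t2, hcover⟩ := hclaim
          obtain ⟨R, hRinj, hRmem⟩ := havail t1 t2
          apply solvable_of_Zstruct X Y A z Z hside hZcard zs hzs R hRinj
          · intro i
            have h1 := (mem_sdiff.1 (hRmem i)).1
            rw [hYsdef] at h1
            exact h1
          · intro i
            exact hYsZ i _ (mem_sdiff.1 (hRmem i)).1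
          · intro j
            rcases hcover j with h | ⟨hm, hZ'⟩ | ⟨hm, hZ'⟩
            · exact ⟨zs, h, Or.inl rfl⟩
            · refine ⟨t1, hm, Or.inr ⟨hZ', ?_⟩⟩
              intro i hc
              exact (mem_sdiff.1 (hRmem i)).2 (by rw [← hc]; simp)
            · refine ⟨t2, hm, Or.inr ⟨hZ', ?_⟩⟩
              intro i hc
              exact (mem_sdiff.1 (hRmem i)).2 (by rw [← hc]; simp)
    -- Case 3 : no 2-element cover
    · push_neg at hcov2
      by_cases hedge : ∃ p q : Fin 4, p ≠ q ∧ ∃ e, e ∈ A p ∧ e ∈ A q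
      · obtain ⟨p, q, hpq, e, hep, heq⟩ := hedge
        have hperm : ∀ p q : Fin 4, p ≠ q →
            ∃ π : Equiv.Perm (Fin 4), π 0 = p ∧ π 1 = q := by decide
        obtain ⟨π, hπ0, hπ1⟩ := hperm p q hpq
        apply solvable_perm X Y A π
        have hsur : ∀ j : Fin 4, ∃ j', π j' = j := fun j => ⟨π.symm j, by simp⟩
        have he0' : e ∈ A (π 0) := by rw [hπ0]; exact hep
        have he1' : e ∈ A (π 1) := by rw [hπ1]; exact heq
        have h23' : A (π 2) ∩ A (π 3) = ∅ := by
          rw [Finset.eq_empty_iff_forall_notMem]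
          intro γ hγ
          rw [mem_inter] at hγ
          obtain ⟨j, hj1, hj2⟩ := hcov2 e γ
          obtain ⟨j', rfl⟩ := hsur j
          rcases fin4_cases j' with rfl | rfl | rfl | rfl
          · exact hj1 he0'
          · exact hj1 he1'
          · exact hj2 hγ.1
          · exact hj2 hγ.2
        have hnonempty3 : (A (π 3)).Nonempty :=
          card_pos.mp (by have := hA (π 3); omega)
        have hnonempty2 : (A (π 2)).Nonempty :=
          card_pos.mp (by have := hA (π 2); omega)
        have he2' : e ∉ A (π 2) := by
          intro hco
          obtain ⟨δ, hδ⟩ := hnonempty3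
          obtain ⟨j, hj1, hj2⟩ := hcov2 e δ
          obtain ⟨j', rfl⟩ := hsur j
          rcases fin4_cases j' with rfl | rfl | rfl | rfl
          · exact hj1 he0'
          · exact hj1 he1'
          · exact hj1 hco
          · exact hj2 hδ
        have he3' : e ∉ A (π 3) := by
          intro hco
          obtain ⟨δ, hδ⟩ := hnonempty2
          obtain ⟨j, hj1, hj2⟩ := hcov2 e δ
          obtain ⟨j', rfl⟩ := hsur j
          rcases fin4_cases j' with rfl | rfl | rfl | rfl
          · exact hj1 he0'
          · exact hj1 he1'
          · exact hj2 hδ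
          · exact hj1 hco
        exact tau3 X Y (fun j => A (π j)) hX hY (fun j => hA (π j)) hsplit e
          he0' he1' h23' he2' he3'
      · push_neg at hedge
        apply tau4 hr1 X Y A hX hY hA hsplit
        intro j j' hne
        rw [Finset.eq_empty_iff_forall_notMem]
        intro γ hγ
        rw [mem_inter] at hγ
        exact hedge j j' hne γ hγ.1 hγ.2

/-- The main combinatorial theorem (Enomoto–Ohba–Ota–Sakamoto, hard direction):
for an even number of pairs, lists of size `r + 1` suffice. -/
theorem MAIN {r : ℕ} (hr : Even r) (X Y : Fin r → Finset ℕ) (A : Fin 4 → Finset ℕ)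
    (hX : ∀ i, r + 1 ≤ (X i).card) (hY : ∀ i, r + 1 ≤ (Y i).card)
    (hA : ∀ j, r + 1 ≤ (A j).card) : Solvable X Y A :=
  W r X Y A hX hY hA (Or.inl hr)

section Graph

variable {k : ℕ}

abbrev Vk (k : ℕ) := Σ i : Fin k, Fin (if i.val = 0 then 4 else 2)

abbrev Gk (k : ℕ) : SimpleGraph (Vk k) :=
  SimpleGraph.completeMultipartiteGraph (fun i : Fin k => Fin (if i.val = 0 then 4 else 2))

theorem vertex_ext {v w : Vk k} (h1 : v.1.val = w.1.val) (h2 : v.2.val = w.2.val) :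
    v = w := by
  rcases v with ⟨i, a⟩
  rcases w with ⟨i', a'⟩
  simp only at h1 h2
  have hii : i = i' := Fin.ext h1
  subst hii
  exact Sigma.ext rfl (heq_of_eq (Fin.ext h2))

def vzero (hk : 0 < k) (j : Fin 4) : Vk k := ⟨⟨0, hk⟩, j⟩

def vpair (i : ℕ) (h : i + 1 < k) (j : Fin 2) : Vk k := ⟨⟨i + 1, h⟩, j⟩

def Xof (hk : 2 ≤ k) (L : Vk k → Finset ℕ) : Fin (k - 1) → Finset ℕ :=
  fun i => L (vpair i.val (by have := i.isLt; omega) 0)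

def Yof (hk : 2 ≤ k) (L : Vk k → Finset ℕ) : Fin (k - 1) → Finset ℕ :=
  fun i => L (vpair i.val (by have := i.isLt; omega) 1)

def Aof (hk : 2 ≤ k) (L : Vk k → Finset ℕ) : Fin 4 → Finset ℕ :=
  fun j => L (vzero (by omega) j)

theorem listColorable_of_solvable (hk : 2 ≤ k) (L : Vk k → Finset ℕ)
    (h : Solvable (Xof hk L) (Yof hk L) (Aof hk L)) : ListColorable (Gk k) L := by
  obtain ⟨f, g, a, ⟨hfm, hgm, hfg⟩, ham, had⟩ := h
  refine ⟨fun v =>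
    if h0 : v.1.val = 0 then a ⟨v.2.val, by have := v.2.isLt; split at this <;> omega⟩
    else if v.2.val = 0 then f ⟨v.1.val - 1, by have := v.1.isLt; omega⟩
      else g ⟨v.1.val - 1, by have := v.1.isLt; omega⟩, ?_, ?_⟩
  · intro v
    by_cases h0 : v.1.val = 0
    · simp only [dif_pos h0]
      have hj4 : v.2.val < 4 := by have := v.2.isLt; split at this <;> omega
      have hv : v = vzero (by omega) ⟨v.2.val, hj4⟩ := by
        apply vertex_ext
        · exact h0
        · rfl
      have hL : L v = Aof hk L ⟨v.2.val, hj4⟩ := by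
        conv_lhs => rw [hv]
        rfl
      rw [hL]
      exact ham ⟨v.2.val, hj4⟩
    · simp only [dif_neg h0]
      have hj2 : v.2.val < 2 := by have := v.2.isLt; split at this <;> omega
      have hi : v.1.val - 1 < k - 1 := by have := v.1.isLt; omega
      by_cases hj0 : v.2.val = 0
      · simp only [if_pos hj0]
        have hv : v = vpair (v.1.val - 1) (by have := v.1.isLt; omega) 0 := by
          apply vertex_ext
          · show v.1.val = v.1.val - 1 + 1
            omega
          · show v.2.val = ((0 : Fin 2) : Fin 2).val
            simp only [Fin.val_zero]
            omega
        have hL : L v = Xof hk L ⟨v.1.val - 1, hi⟩ := by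
          conv_lhs => rw [hv]
          rfl
        rw [hL]
        exact hfm ⟨v.1.val - 1, hi⟩
      · simp only [if_neg hj0]
        have hv : v = vpair (v.1.val - 1) (by have := v.1.isLt; omega) 1 := by
          apply vertex_ext
          · show v.1.val = v.1.val - 1 + 1
            omega
          · show v.2.val = ((1 : Fin 2) : Fin 2).val
            simp only [Fin.val_one]
            omega
        have hL : L v = Yof hk L ⟨v.1.val - 1, hi⟩ := by
          conv_lhs => rw [hv]
          rfl
        rw [hL]
        exact hgm ⟨v.1.val - 1, hi⟩
  · intro u w hadj
    have hne : u.1.val ≠ w.1.val := by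
      intro hval
      exact hadj (Fin.ext hval)
    by_cases h0 : u.1.val = 0 <;> by_cases h0' : w.1.val = 0
    · exact absurd (h0.trans h0'.symm) hne
    · simp only [dif_pos h0, dif_neg h0']
      by_cases hj0 : w.2.val = 0
      · simp only [if_pos hj0]; exact (had _ _).1
      · simp only [if_neg hj0]; exact (had _ _).2
    · simp only [dif_neg h0, dif_pos h0']
      by_cases hj0 : u.2.val = 0
      · simp only [if_pos hj0]; exact fun hcontra => (had _ _).1 hcontra.symm
      · simp only [if_neg hj0]; exact fun hcontra => (had _ _).2 hcontra.symm
    · simp only [dif_neg h0, dif_neg h0']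
      have hii : (⟨u.1.val - 1, by have := u.1.isLt; omega⟩ : Fin (k - 1)) ≠
          ⟨w.1.val - 1, by have := w.1.isLt; omega⟩ := by
        intro hcontra
        apply hne
        simp only [Fin.mk.injEq] at hcontra
        omega
      have h4 := hfg _ _ hii
      by_cases hj0 : u.2.val = 0 <;> by_cases hj0' : w.2.val = 0
      · simp only [if_pos hj0, if_pos hj0']; exact h4.1
      · simp only [if_pos hj0, if_neg hj0']; exact h4.2.1
      · simp only [if_neg hj0, if_pos hj0']; exact h4.2.2.1
      · simp only [if_neg hj0, if_neg hj0']; exact h4.2.2.2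


theorem chi_lower (hk : 2 ≤ k) (n : ℕ) (h : Choosable (Gk k) n) : k ≤ n := by
  obtain ⟨c, hcm, hcp⟩ := h (fun _ => range n) (fun v => by simp)
  set φ : Fin k → ℕ := fun i => c ⟨i, ⟨0, by split <;> omega⟩⟩ with hφ
  have hφinj : Function.Injective φ := by
    intro i i' hii
    by_contra hne
    have hadj : (Gk k).Adj ⟨i, ⟨0, by split <;> omega⟩⟩ ⟨i', ⟨0, by split <;> omega⟩⟩ := by
      simpa using hne
    exact hcp hadj hii
  have hmapsto : ∀ i ∈ (univ : Finset (Fin k)), φ i ∈ range n := by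
    intro i _
    rw [hφ]
    exact hcm _
  have h1 : (univ : Finset (Fin k)).card ≤ (range n).card :=
    Finset.card_le_card_of_injOn φ hmapsto hφinj.injOn
  simpa using h1

theorem choosable_mono {V : Type*} (G : SimpleGraph V) {n n' : ℕ} (h : n ≤ n')
    (hch : Choosable G n) : Choosable G n' :=
  fun L hL => hch L (fun v => le_trans h (hL v))

def Lbad (k m : ℕ) : Vk k → Finset ℕ := fun v =>
  if v.1.val = 0 then
    (if v.2.val = 0 then Ico 0 (2*m)
     else if v.2.val = 1 then Ico (2*m) (4*m)
     else if v.2.val = 2 then Ico 0 m ∪ Ico (2*m) (3*m)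
     else Ico m (2*m) ∪ Ico (3*m) (4*m))
  else (if v.2.val = 0 then Ico 0 m ∪ Ico (3*m) (4*m) else Ico m (3*m))

theorem not_choosable_even (hk : 2 ≤ k) (hke : Even k) : ¬ Choosable (Gk k) k := by
  obtain ⟨m, hm⟩ := hke
  have hm1 : 1 ≤ m := by omega
  intro hch
  classical
  have hdisj : ∀ a b c d : ℕ, b ≤ c → Disjoint (Ico a b) (Ico c d) := by
    intro a b c d h
    simp only [Finset.disjoint_left, mem_Ico]
    intro x hx hy
    omega
  have hcards : ∀ v, k ≤ (Lbad k m v).card := by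
    intro v
    simp only [Lbad]
    by_cases h0 : v.1.val = 0
    · rw [if_pos h0]
      by_cases ha : v.2.val = 0
      · rw [if_pos ha]; simp [Nat.card_Ico]; omega
      · rw [if_neg ha]
        by_cases hb : v.2.val = 1
        · rw [if_pos hb]; simp [Nat.card_Ico]; omega
        · rw [if_neg hb]
          by_cases hc2 : v.2.val = 2
          · rw [if_pos hc2, card_union_of_disjoint (hdisj _ _ _ _ (by omega))]
            simp [Nat.card_Ico]; omega
          · rw [if_neg hc2, card_union_of_disjoint (hdisj _ _ _ _ (by omega))]
            simp [Nat.card_Ico]; omega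
    · rw [if_neg h0]
      by_cases ha : v.2.val = 0
      · rw [if_pos ha, card_union_of_disjoint (hdisj _ _ _ _ (by omega))]
        simp [Nat.card_Ico]; omega
      · rw [if_neg ha]; simp [Nat.card_Ico]; omega
  obtain ⟨c, hcm, hcp⟩ := hch (Lbad k m) hcards
  have hredP : ∀ (i : ℕ) (h : i + 1 < k) (j : Fin 2),
      Lbad k m (vpair i h j) =
        (if j.val = 0 then Ico 0 m ∪ Ico (3*m) (4*m) else Ico m (3*m)) := by
    intro i h j
    rfl
  have hred0 : ∀ (h0 : 0 < k) (j : Fin 4),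
      Lbad k m (vzero h0 j) =
        (if j.val = 0 then Ico 0 (2*m)
         else if j.val = 1 then Ico (2*m) (4*m)
         else if j.val = 2 then Ico 0 m ∪ Ico (2*m) (3*m)
         else Ico m (2*m) ∪ Ico (3*m) (4*m)) := by
    intro h0 j
    rfl
  have hk0 : 0 < k := by omega
  set u : Fin (k-1) → ℕ := fun i => c (vpair i.val (by have := i.isLt; omega) 0) with hu
  set uu : Fin (k-1) → ℕ := fun i => c (vpair i.val (by have := i.isLt; omega) 1) with huu
  have humem : ∀ i, u i ∈ Ico 0 m ∪ Ico (3*m) (4*m) := by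
    intro i
    have h1 := hcm (vpair i.val (by have := i.isLt; omega) 0)
    rw [hredP] at h1
    simpa using h1
  have huumem : ∀ i, uu i ∈ Ico m (3*m) := by
    intro i
    have h1 := hcm (vpair i.val (by have := i.isLt; omega) 1)
    rw [hredP] at h1
    simpa using h1
  have hadjpair : ∀ (i i' : ℕ) (h : i + 1 < k) (h' : i' + 1 < k) (j j' : Fin 2),
      i ≠ i' → (Gk k).Adj (vpair i h j) (vpair i' h' j') := by
    intro i i' h h' j j' hne
    have : (vpair i h j : Vk k).1 ≠ (vpair i' h' j' : Vk k).1 := by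
      intro hc
      have := congrArg Fin.val hc
      simp only [vpair] at this
      omega
    simpa using this
  have huinj : Function.Injective u := by
    intro i i' hii
    by_contra hne
    exact hcp (hadjpair _ _ _ _ _ _ (by
      intro hc; exact hne (Fin.ext (by omega)))) hii
  have huuinj : Function.Injective uu := by
    intro i i' hii
    by_contra hne
    exact hcp (hadjpair _ _ _ _ _ _ (by
      intro hc; exact hne (Fin.ext (by omega)))) hii
  set Pu : Finset ℕ := univ.image u with hPu
  set Pv : Finset ℕ := univ.image uu with hPv
  have hcardPu : Pu.card = k - 1 := by
    rw [hPu, Finset.card_image_of_injective _ huinj]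
    simp
  have hcardPv : Pv.card = k - 1 := by
    rw [hPv, Finset.card_image_of_injective _ huuinj]
    simp
  have hPuX : Pu ⊆ Ico 0 m ∪ Ico (3*m) (4*m) := by
    rw [hPu]
    intro x hx
    obtain ⟨i, _, rfl⟩ := Finset.mem_image.mp hx
    exact humem i
  have hPvY : Pv ⊆ Ico m (3*m) := by
    rw [hPv]
    intro x hx
    obtain ⟨i, _, rfl⟩ := Finset.mem_image.mp hx
    exact huumem i
  have hXcard : (Ico 0 m ∪ Ico (3*m) (4*m)).card = k := by
    rw [card_union_of_disjoint (hdisj _ _ _ _ (by omega))]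
    simp [Nat.card_Ico]; omega
  have hYcard : (Ico m (3*m)).card = k := by simp [Nat.card_Ico]; omega
  have hzcard : ((Ico 0 m ∪ Ico (3*m) (4*m)) \ Pu).card = 1 := by
    rw [card_sdiff_of_subset hPuX, hXcard, hcardPu]; omega
  have hwcard : ((Ico m (3*m)) \ Pv).card = 1 := by
    rw [card_sdiff_of_subset hPvY, hYcard, hcardPv]; omega
  obtain ⟨z, hz⟩ := Finset.card_eq_one.mp hzcard
  obtain ⟨w, hw⟩ := Finset.card_eq_one.mp hwcard
  have hzmem : z ∈ Ico 0 m ∪ Ico (3*m) (4*m) := by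
    have : z ∈ (Ico 0 m ∪ Ico (3*m) (4*m)) \ Pu := by rw [hz]; exact mem_singleton_self z
    exact (mem_sdiff.mp this).1
  have hwmem : w ∈ Ico m (3*m) := by
    have : w ∈ (Ico m (3*m)) \ Pv := by rw [hw]; exact mem_singleton_self w
    exact (mem_sdiff.mp this).1
  -- the four vertices of the 4-part
  have haeq : ∀ j : Fin 4, c (vzero hk0 j) = z ∨ c (vzero hk0 j) = w := by
    intro j
    have hadj0 : ∀ (i : ℕ) (h : i + 1 < k) (j' : Fin 2),
        (Gk k).Adj (vzero hk0 j) (vpair i h j') := by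
      intro i h j'
      have : (vzero hk0 j : Vk k).1 ≠ (vpair i h j' : Vk k).1 := by
        intro hc
        have := congrArg Fin.val hc
        simp only [vzero, vpair] at this
        omega
      simpa using this
    have hnu : ∀ i, c (vzero hk0 j) ≠ u i := fun i => hcp (hadj0 _ _ _)
    have hnuu : ∀ i, c (vzero hk0 j) ≠ uu i := fun i => hcp (hadj0 _ _ _)
    have hmem := hcm (vzero hk0 j)
    rw [hred0] at hmem
    have hXY : c (vzero hk0 j) ∈ Ico 0 m ∪ Ico (3*m) (4*m) ∨
        c (vzero hk0 j) ∈ Ico m (3*m) := by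
      split at hmem
      · simp only [mem_union, mem_Ico] at hmem ⊢; omega
      · split at hmem
        · simp only [mem_union, mem_Ico] at hmem ⊢; omega
        · split at hmem
          · simp only [mem_union, mem_Ico] at hmem ⊢; omega
          · simp only [mem_union, mem_Ico] at hmem ⊢; omega
    rcases hXY with hX | hY
    · left
      have : c (vzero hk0 j) ∈ (Ico 0 m ∪ Ico (3*m) (4*m)) \ Pu := by
        rw [mem_sdiff]
        refine ⟨hX, ?_⟩
        rw [hPu]
        simp only [Finset.mem_image, mem_univ, true_and, not_exists]
        intro i hi
        exact hnu i hi.symm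
      rw [hz, mem_singleton] at this
      exact this
    · right
      have : c (vzero hk0 j) ∈ (Ico m (3*m)) \ Pv := by
        rw [mem_sdiff]
        refine ⟨hY, ?_⟩
        rw [hPv]
        simp only [Finset.mem_image, mem_univ, true_and, not_exists]
        intro i hi
        exact hnuu i hi.symm
      rw [hw, mem_singleton] at this
      exact this
  -- extract arithmetic facts
  have hred0' : ∀ (jv : ℕ) (hj : jv < 4),
      Lbad k m (vzero hk0 ⟨jv, hj⟩) =
        (if jv = 0 then Ico 0 (2*m)
         else if jv = 1 then Ico (2*m) (4*m)
         else if jv = 2 then Ico 0 m ∪ Ico (2*m) (3*m)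
         else Ico m (2*m) ∪ Ico (3*m) (4*m)) := by
    intro jv hj
    rfl
  have final : ∀ (jv : ℕ) (hj : jv < 4),
      z ∈ Lbad k m (vzero hk0 ⟨jv, hj⟩) ∨ w ∈ Lbad k m (vzero hk0 ⟨jv, hj⟩) := by
    intro jv hj
    rcases haeq ⟨jv, hj⟩ with e | e
    · left; rw [← e]; exact hcm _
    · right; rw [← e]; exact hcm _
  have f0 := final 0 (by omega)
  have f1 := final 1 (by omega)
  have f2 := final 2 (by omega)
  have f3 := final 3 (by omega)
  rw [hred0'] at f0 f1 f2 f3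
  norm_num at f0 f1 f2 f3
  simp only [mem_union, mem_Ico] at f0 f1 f2 f3 hzmem hwmem
  omega

end Graph

end EOOS

theorem choiceNumber_K4_2xk1 (k : ℕ) (hk : 2 ≤ k) :
    IsLeast {n | Choosable (SimpleGraph.completeMultipartiteGraph
      (fun i : Fin k => Fin (if i.val = 0 then 4 else 2))) n}
      (if Odd k then k else k + 1) := by
  have hk1 : k - 1 + 1 = k := by omega
  have hk2 : k - 1 + 2 = k + 1 := by omega
  by_cases hodd : Odd k
  · rw [if_pos hodd]
    constructor
    · show Choosable (EOOS.Gk k) k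
      intro L hL
      apply EOOS.listColorable_of_solvable hk L
      obtain ⟨a, ha⟩ := hodd
      refine EOOS.MAIN ⟨a, by omega⟩ _ _ _ ?_ ?_ ?_
      · intro i; rw [hk1]; exact hL _
      · intro i; rw [hk1]; exact hL _
      · intro j; rw [hk1]; exact hL _
    · intro n hn
      exact EOOS.chi_lower hk n hn
  · rw [if_neg hodd]
    have hke : Even k := Nat.not_odd_iff_even.mp hodd
    constructor
    · show Choosable (EOOS.Gk k) (k + 1)
      intro L hL
      apply EOOS.listColorable_of_solvable hk L
      refine EOOS.U2 _ _ _ ?_ ?_ ?_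
      · intro i; rw [hk2]; exact hL _
      · intro i; rw [hk2]; exact hL _
      · intro j; rw [hk2]; exact hL _
    · intro n hn
      have h1 : k ≤ n := EOOS.chi_lower hk n hn
      rcases eq_or_lt_of_le h1 with rfl | h2
      · exact absurd hn (EOOS.not_choosable_even hk hke)
      · omega
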